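/- arXiv:1911.11936 — 4 statements merged into one kernel-verified Lean document; each statement's English description precedes it below -/
import Mathlib

section
/- Ω(nk/ε²) samples are necessary for learning on product distributions with finite marginal supports: there exist absolute constants c, c' > 0 such that for all positive integers n, k and all ε ∈ (0, 1/2), taking T = {0, ±1, …, ±k} and the hypothesis class H = {h^v : v ∈ {±1}^{n×k}} with h^v(t) = 1 if t has exactly one nonzero coordinate, namely coordinate i equal to v_{i,j}·j for some j ∈ [k], and h^v(t) = 0 otherwise, the following holds: for any (possibly randomized) learning algorithm A that maps N ≤ c·nk/ε² i.i.d. samples to a hypothesis in H, there exists v ∈ {±1}^{n×k} such that the expected additive error E_{s∼(D^v)^N}[Opt_H(D^v) − h^{A(s)}(D^v)] is at least c'·ε, where D^v is the product distribution whose i-th marginal puts mass 1−1/n on 0, mass (1+ε)/(2nk) on v_{i,j}·j and mass (1−ε)/(2nk) on −v_{i,j}·j for each j ∈ [k]. -/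
/-- Sign encoding: `true ↦ +1`, `false ↦ −1`. -/
def sgn (b : Bool) : ℤ := if b then 1 else -1

/-- The hard hypothesis `h^v`: value `1` iff `t` has exactly one nonzero coordinate,
namely coordinate `i` equal to `v_{i,j} · j` for some `j ∈ [k]` (here `j ∈ Fin k`
encodes the value `j+1 ∈ {1,…,k}`). -/
noncomputable def hyp (n k : ℕ) (v : Fin n → Fin k → Bool) (t : Fin n → ℤ) : ℝ :=
  open Classical in
  if (∃ i : Fin n, ∃ j : Fin k,
      (∀ i' : Fin n, i' ≠ i → t i' = 0) ∧ t i = sgn (v i j) * ((j : ℤ) + 1)) then 1 else 0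

/-- The `i`-th marginal mass function of the hard distribution `D^v`:
mass `1 − 1/n` on `0`, mass `(1+ε)/(2nk)` on `v_{i,j}·j` and `(1−ε)/(2nk)` on `−v_{i,j}·j`. -/
noncomputable def marg (n k : ℕ) (ε : ℝ) (v : Fin n → Fin k → Bool) (i : Fin n) (x : ℤ) : ℝ :=
  if x = 0 then 1 - 1 / (n : ℝ)
  else if hx : 1 ≤ x.natAbs ∧ x.natAbs ≤ k then
    (if (0 < x) = (v i ⟨x.natAbs - 1, by omega⟩ = true)
      then (1 + ε) / (2 * n * k) else (1 - ε) / (2 * n * k))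
  else 0

/-- The support `T = {0, ±1, …, ±k}` as a finset of `ℤ`. -/
noncomputable def Tbox (k : ℕ) : Finset ℤ := Finset.Icc (-(k : ℤ)) k

/-- Expectation of `h` under the product distribution with marginal
mass functions `f i` supported on `{0,±1,…,±k}`. -/
noncomputable def expZ (n k : ℕ) (f : Fin n → ℤ → ℝ) (h : (Fin n → ℤ) → ℝ) : ℝ :=
  ∑ t ∈ Fintype.piFinset (fun _ : Fin n => Tbox k), (∏ i, f i (t i)) * h t

/-- Probability mass of the sample tuple `s` under `N` i.i.d. draws from `D^v`. -/
noncomputable def sampleP (n k N : ℕ) (ε : ℝ) (v : Fin n → Fin k → Bool)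
    (s : Fin N → Fin n → ℤ) : ℝ :=
  ∏ m : Fin N, ∏ i : Fin n, marg n k ε v i (s m i)

/-- The sample space: `N`-tuples of points of `{0,±1,…,±k}ⁿ`. -/
noncomputable def sampleBox (n k N : ℕ) : Finset (Fin N → Fin n → ℤ) :=
  Fintype.piFinset fun _ : Fin N => Fintype.piFinset fun _ : Fin n => Tbox k

/-- `Opt_H(D^v)`: the optimal expected value over the hypothesis class `H = {h^w}`. -/
noncomputable def optZ (n k : ℕ) (ε : ℝ) (v : Fin n → Fin k → Bool) : ℝ :=
  ⨆ w : Fin n → Fin k → Bool, expZ n k (marg n k ε v) (hyp n k w)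

/-- Hamming distance between `v` and `v'`. -/
def hamming {n k : ℕ} (v v' : Fin n → Fin k → Bool) : ℕ :=
  (Finset.univ.filter fun p : Fin n × Fin k => v p.1 p.2 ≠ v' p.1 p.2).card

/-!
STATEMENT 1: `Ω(nk/ε²)` samples are necessary: any (possibly randomized) learning
algorithm using `N ≤ c·nk/ε²` samples has expected additive error at least `c'·ε`
on some hard distribution `D^v`.  A randomized algorithm is modelled as a map from
samples to a probability mass function over the (finite) hypothesis class. -/
def flipv {n k : ℕ} (v : Fin n → Fin k → Bool) (p0 : Fin n × Fin k) : Fin n → Fin k → Bool :=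
  fun i j => if i = p0.1 ∧ j = p0.2 then !(v i j) else v i j

namespace LB
open Finset Real

variable {n k : ℕ} {ε : ℝ} {v w : Fin n → Fin k → Bool}

lemma marg_congr {v v' : Fin n → Fin k → Bool} {i : Fin n} (h : v i = v' i) :
    marg n k ε v i = marg n k ε v' i := by
  funext x; unfold marg; rw [h]

lemma marg_nonneg (hn : 1 ≤ n) (hε0 : 0 ≤ ε) (hε1 : ε ≤ 1) (i : Fin n) (x : ℤ) :
    0 ≤ marg n k ε v i x := by
  unfold marg
  have hn' : (1:ℝ) ≤ n := by exact_mod_cast hn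
  split_ifs with h1 h2 h3
  · have : 1/(n:ℝ) ≤ 1 := by
      rw [div_le_one (by linarith)]; linarith
    linarith
  · positivity
  · apply div_nonneg (by linarith)
    positivity
  · exact le_rfl

lemma marg_zero (i : Fin n) : marg n k ε v i 0 = 1 - 1/(n:ℝ) := by simp [marg]

lemma marg_pos {j : ℕ} (hj : j < k) (i : Fin n) :
    marg n k ε v i ((j:ℤ)+1)
      = if v i ⟨j, hj⟩ then (1+ε)/(2*n*k) else (1-ε)/(2*n*k) := by
  unfold marg
  have hne : ((j:ℤ)+1) ≠ 0 := by omega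
  have habs : ((j:ℤ)+1).natAbs = j + 1 := by omega
  rw [if_neg hne]
  have hx : 1 ≤ ((j:ℤ)+1).natAbs ∧ ((j:ℤ)+1).natAbs ≤ k := by omega
  rw [dif_pos hx]
  have hidx : (⟨((j:ℤ)+1).natAbs - 1, by omega⟩ : Fin k) = ⟨j, hj⟩ := by
    apply Fin.ext; simp [habs]
  rw [hidx]
  have h01 : ((0:ℤ) < (j:ℤ)+1) = True := eq_true (by omega)
  cases hv : v i ⟨j, hj⟩ <;> · simp only [h01]; try simp

lemma marg_neg {j : ℕ} (hj : j < k) (i : Fin n) :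
    marg n k ε v i (-((j:ℤ)+1))
      = if v i ⟨j, hj⟩ then (1-ε)/(2*n*k) else (1+ε)/(2*n*k) := by
  unfold marg
  have hne : (-((j:ℤ)+1)) ≠ 0 := by omega
  have habs : (-((j:ℤ)+1)).natAbs = j + 1 := by omega
  rw [if_neg hne]
  have hx : 1 ≤ (-((j:ℤ)+1)).natAbs ∧ (-((j:ℤ)+1)).natAbs ≤ k := by omega
  rw [dif_pos hx]
  have hidx : (⟨(-((j:ℤ)+1)).natAbs - 1, by omega⟩ : Fin k) = ⟨j, hj⟩ := by
    apply Fin.ext; simp only [Fin.mk.injEq]; omega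
  rw [hidx]
  have h01 : ((0:ℤ) < -((j:ℤ)+1)) = False := eq_false (by omega)
  cases hv : v i ⟨j, hj⟩ <;> · simp only [h01]; try simp

lemma sum_Tbox (k : ℕ) (f : ℤ → ℝ) :
    ∑ x ∈ Tbox k, f x = f 0 + ∑ j ∈ Finset.range k, (f ((j:ℤ)+1) + f (-((j:ℤ)+1))) := by
  induction k with
  | zero => simp [Tbox]
  | succ m ih =>
    have hset : Tbox (m+1) = insert ((m:ℤ)+1) (insert (-((m:ℤ)+1)) (Tbox m)) := by
      ext x
      simp only [Tbox, Finset.mem_Icc, Finset.mem_insert]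
      push_cast
      omega
    have hm1 : ((m:ℤ)+1) ∉ insert (-((m:ℤ)+1)) (Tbox m) := by
      simp only [Finset.mem_insert, Tbox, Finset.mem_Icc]; omega
    have hm2 : (-((m:ℤ)+1)) ∉ Tbox m := by
      simp only [Tbox, Finset.mem_Icc]; omega
    rw [hset, Finset.sum_insert hm1, Finset.sum_insert hm2, ih, Finset.sum_range_succ]
    ring

lemma sum_marg (hn : 1 ≤ n) (hk : 1 ≤ k) (i : Fin n) :
    ∑ x ∈ Tbox k, marg n k ε v i x = 1 := by
  rw [sum_Tbox, marg_zero]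
  have : ∀ j ∈ Finset.range k,
      marg n k ε v i ((j:ℤ)+1) + marg n k ε v i (-((j:ℤ)+1)) = 1/((n:ℝ)*k) := by
    intro j hj
    have hj' : j < k := Finset.mem_range.mp hj
    rw [marg_pos hj', marg_neg hj']
    have hn0 : (n:ℝ) ≠ 0 := by positivity
    have hk0 : (k:ℝ) ≠ 0 := by positivity
    cases hv : v i ⟨j, hj'⟩ <;> simp only [Bool.false_eq_true, if_false, if_true] <;> field_simp <;> ring
  rw [Finset.sum_congr rfl this, Finset.sum_const, Finset.card_range]
  have hn0 : (n:ℝ) ≠ 0 := by positivity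
  have hk0 : (k:ℝ) ≠ 0 := by positivity
  rw [nsmul_eq_mul, mul_one_div, mul_comm (n:ℝ) k, ← div_div, div_self hk0]
  ring

lemma flipv_row_ne {v : Fin n → Fin k → Bool} {p0 : Fin n × Fin k} {i : Fin n}
    (h : i ≠ p0.1) : flipv v p0 i = v i := by
  funext j; simp [flipv, h]

lemma flipv_at (v : Fin n → Fin k → Bool) (p0 : Fin n × Fin k) :
    flipv v p0 p0.1 p0.2 = !(v p0.1 p0.2) := by simp [flipv]

lemma flipv_col_ne {v : Fin n → Fin k → Bool} {p0 : Fin n × Fin k} {i : Fin n} {j : Fin k}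
    (h : j ≠ p0.2) : flipv v p0 i j = v i j := by simp [flipv, h]

lemma flipv_invol (v : Fin n → Fin k → Bool) (p0 : Fin n × Fin k) :
    flipv (flipv v p0) p0 = v := by
  funext i j; simp only [flipv]; split_ifs <;> simp

lemma sqrt_prod {α : Type*} (s : Finset α) (f : α → ℝ) (h : ∀ i ∈ s, 0 ≤ f i) :
    Real.sqrt (∏ i ∈ s, f i) = ∏ i ∈ s, Real.sqrt (f i) := by
  induction s using Finset.cons_induction with
  | empty => simp
  | cons a s ha ih =>
    rw [Finset.prod_cons, Finset.prod_cons,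
      Real.sqrt_mul (h a (Finset.mem_cons_self a s)),
      ih (fun i hi => h i (Finset.mem_cons_of_mem hi))]

lemma bhat_same (hn : 1 ≤ n) (hk : 1 ≤ k) (hε0 : 0 ≤ ε) (hε1 : ε ≤ 1)
    {v v' : Fin n → Fin k → Bool} {i : Fin n} (h : v i = v' i) :
    ∑ x ∈ Tbox k, Real.sqrt (marg n k ε v i x * marg n k ε v' i x) = 1 := by
  have hc : ∀ x ∈ Tbox k,
      Real.sqrt (marg n k ε v i x * marg n k ε v' i x) = marg n k ε v i x := by
    intro x _
    rw [← marg_congr (ε := ε) h, Real.sqrt_mul_self (marg_nonneg hn hε0 hε1 i x)]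
  rw [Finset.sum_congr rfl hc, sum_marg hn hk]

lemma bhat_flip (hn : 1 ≤ n) (hk : 1 ≤ k) (hε0 : 0 ≤ ε) (hε1 : ε ≤ 1)
    (v : Fin n → Fin k → Bool) (p0 : Fin n × Fin k) :
    1 - ε^2/((n:ℝ)*k) ≤
      ∑ x ∈ Tbox k,
        Real.sqrt (marg n k ε v p0.1 x * marg n k ε (flipv v p0) p0.1 x) := by
  have hn0 : (0:ℝ) < n := by positivity
  have hk0 : (0:ℝ) < k := by positivity
  have hsq : 0 ≤ 1 - ε^2 := by nlinarith
  have ha : (0:ℝ) ≤ (1+ε)/(2*(n:ℝ)*k) := div_nonneg (by linarith) (by positivity)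
  have hb : (0:ℝ) ≤ (1-ε)/(2*(n:ℝ)*k) := div_nonneg (by linarith) (by positivity)
  rw [sum_Tbox]
  have h0 : Real.sqrt (marg n k ε v p0.1 0 * marg n k ε (flipv v p0) p0.1 0)
      = 1 - 1/(n:ℝ) := by
    rw [marg_zero, marg_zero, Real.sqrt_mul_self]
    have : 1/(n:ℝ) ≤ 1 := by
      rw [div_le_one hn0]; exact_mod_cast hn
    linarith
  have hj0mem : (p0.2 : ℕ) ∈ Finset.range k := by simp [p0.2.isLt]
  rw [← Finset.sum_erase_add _ _ hj0mem]
  have herase : ∀ j ∈ (Finset.range k).erase (p0.2 : ℕ),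
      (Real.sqrt (marg n k ε v p0.1 ((j:ℤ)+1) * marg n k ε (flipv v p0) p0.1 ((j:ℤ)+1)) +
       Real.sqrt (marg n k ε v p0.1 (-((j:ℤ)+1)) * marg n k ε (flipv v p0) p0.1 (-((j:ℤ)+1))))
      = 1/((n:ℝ)*k) := by
    intro j hj
    obtain ⟨hne, hjr⟩ := Finset.mem_erase.mp hj
    have hj' : j < k := Finset.mem_range.mp hjr
    have hcol : (⟨j, hj'⟩ : Fin k) ≠ p0.2 := by
      intro hcontra
      exact hne (by rw [← hcontra])
    have hflip : flipv v p0 p0.1 ⟨j, hj'⟩ = v p0.1 ⟨j, hj'⟩ := flipv_col_ne hcol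
    rw [marg_pos hj', marg_pos hj', marg_neg hj', marg_neg hj', hflip]
    cases hv : v p0.1 ⟨j, hj'⟩ <;>
    · simp only [Bool.false_eq_true, if_false, if_true]
      rw [Real.sqrt_mul_self ha, Real.sqrt_mul_self hb]
      field_simp
      ring
  have hprod : (1+ε)/(2*(n:ℝ)*k) * ((1-ε)/(2*(n:ℝ)*k)) = (1-ε^2)/(2*(n:ℝ)*k)^2 := by
    field_simp; ring
  have hsqrt : Real.sqrt ((1-ε^2)/(2*(n:ℝ)*k)^2) = Real.sqrt (1-ε^2)/(2*(n:ℝ)*k) := by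
    rw [Real.sqrt_div hsq, Real.sqrt_sq (by positivity)]
  have hab : Real.sqrt ((1+ε)/(2*(n:ℝ)*k) * ((1-ε)/(2*(n:ℝ)*k)))
      = Real.sqrt (1-ε^2)/(2*(n:ℝ)*k) := by rw [hprod, hsqrt]
  have hba : Real.sqrt ((1-ε)/(2*(n:ℝ)*k) * ((1+ε)/(2*(n:ℝ)*k)))
      = Real.sqrt (1-ε^2)/(2*(n:ℝ)*k) := by rw [mul_comm, hprod, hsqrt]
  have hj0 :
      (Real.sqrt (marg n k ε v p0.1 (((p0.2:ℕ):ℤ)+1) *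
          marg n k ε (flipv v p0) p0.1 (((p0.2:ℕ):ℤ)+1)) +
       Real.sqrt (marg n k ε v p0.1 (-(((p0.2:ℕ):ℤ)+1)) *
          marg n k ε (flipv v p0) p0.1 (-(((p0.2:ℕ):ℤ)+1))))
      = Real.sqrt (1 - ε^2) / ((n:ℝ)*k) := by
    have hj' : (p0.2 : ℕ) < k := p0.2.isLt
    have hidx : (⟨(p0.2 : ℕ), hj'⟩ : Fin k) = p0.2 := by apply Fin.ext; rfl
    have hflip : flipv v p0 p0.1 p0.2 = !(v p0.1 p0.2) := flipv_at v p0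
    rw [marg_pos hj', marg_pos hj', marg_neg hj', marg_neg hj', hidx, hflip]
    cases hv : v p0.1 p0.2 <;>
    · simp only [Bool.not_false, Bool.not_true, Bool.false_eq_true, if_false, if_true]
      rw [hab, hba]
      field_simp
      ring
  rw [h0, Finset.sum_congr rfl herase, hj0, Finset.sum_const,
    Finset.card_erase_of_mem hj0mem, Finset.card_range, nsmul_eq_mul]
  have hkc : (↑(k-1) : ℝ) = (k:ℝ) - 1 := by
    push_cast [hk]; ring
  have hsle : 1 - ε^2 ≤ Real.sqrt (1 - ε^2) := by
    nlinarith [Real.sq_sqrt hsq, Real.sqrt_nonneg (1-ε^2), sq_nonneg (Real.sqrt (1-ε^2) - 1)]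
  have hdiv : (1-ε^2)/((n:ℝ)*k) ≤ Real.sqrt (1-ε^2)/((n:ℝ)*k) := by gcongr
  have key : (1-1/(n:ℝ)) + (((k:ℝ)-1)*(1/((n:ℝ)*k)) + (1-ε^2)/((n:ℝ)*k))
      = 1 - ε^2/((n:ℝ)*k) := by
    field_simp; ring
  rw [hkc]
  linarith

lemma sampleP_nonneg (hn : 1 ≤ n) (hε0 : 0 ≤ ε) (hε1 : ε ≤ 1) {N : ℕ}
    (v : Fin n → Fin k → Bool) (s : Fin N → Fin n → ℤ) :
    0 ≤ sampleP n k N ε v s := by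
  apply Finset.prod_nonneg
  intro m _
  exact Finset.prod_nonneg fun i _ => marg_nonneg hn hε0 hε1 i (s m i)

lemma sum_sampleP (hn : 1 ≤ n) (hk : 1 ≤ k) {N : ℕ} (v : Fin n → Fin k → Bool) :
    ∑ s ∈ sampleBox n k N, sampleP n k N ε v s = 1 := by
  unfold sampleBox sampleP
  rw [← Finset.prod_univ_sum (fun _ : Fin N => Fintype.piFinset fun _ : Fin n => Tbox k)
    (fun _ u => ∏ i, marg n k ε v i (u i))]
  have hinner : ∀ m : Fin N,
      ∑ u ∈ Fintype.piFinset (fun _ : Fin n => Tbox k), ∏ i, marg n k ε v i (u i) = 1 := by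
    intro m
    rw [← Finset.prod_univ_sum (fun _ : Fin n => Tbox k) (fun i x => marg n k ε v i x)]
    rw [Finset.prod_congr rfl (fun i _ => sum_marg hn hk i), Finset.prod_const_one]
  rw [Finset.prod_congr rfl (fun m _ => hinner m), Finset.prod_const_one]

lemma bhat_sample (hn : 1 ≤ n) (hk : 1 ≤ k) (hε0 : 0 ≤ ε) (hε1 : ε ≤ 1) {N : ℕ}
    (v : Fin n → Fin k → Bool) (p0 : Fin n × Fin k) :
    (1 - ε^2/((n:ℝ)*k))^N ≤
      ∑ s ∈ sampleBox n k N,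
        Real.sqrt (sampleP n k N ε v s * sampleP n k N ε (flipv v p0) s) := by
  have hn0 : (0:ℝ) < n := by positivity
  have hk0 : (0:ℝ) < k := by positivity
  have hone : 0 ≤ 1 - ε^2/((n:ℝ)*k) := by
    have h1 : ε^2 ≤ 1 := by nlinarith
    have h2 : (1:ℝ) ≤ (n:ℝ)*k := by
      have : (1:ℝ) ≤ (n:ℝ) := by exact_mod_cast hn
      have : (1:ℝ) ≤ (k:ℝ) := by exact_mod_cast hk
      nlinarith
    have : ε^2/((n:ℝ)*k) ≤ 1 := by
      rw [div_le_one (by positivity)]; linarith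
    linarith
  have hsummand : ∀ s ∈ sampleBox n k N,
      Real.sqrt (sampleP n k N ε v s * sampleP n k N ε (flipv v p0) s)
      = ∏ m : Fin N, ∏ i : Fin n,
          Real.sqrt (marg n k ε v i (s m i) * marg n k ε (flipv v p0) i (s m i)) := by
    intro s _
    unfold sampleP
    rw [← Finset.prod_mul_distrib]
    rw [sqrt_prod _ _ (fun m _ => by
      rw [← Finset.prod_mul_distrib]
      exact Finset.prod_nonneg fun i _ =>
        mul_nonneg (marg_nonneg hn hε0 hε1 i (s m i)) (marg_nonneg hn hε0 hε1 i (s m i)))]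
    apply Finset.prod_congr rfl
    intro m _
    rw [← Finset.prod_mul_distrib]
    exact sqrt_prod _ _ (fun i _ =>
      mul_nonneg (marg_nonneg hn hε0 hε1 i (s m i)) (marg_nonneg hn hε0 hε1 i (s m i)))
  rw [Finset.sum_congr rfl hsummand]
  unfold sampleBox
  rw [← Finset.prod_univ_sum (fun _ : Fin N => Fintype.piFinset fun _ : Fin n => Tbox k)
    (fun _ u => ∏ i, Real.sqrt (marg n k ε v i (u i) * marg n k ε (flipv v p0) i (u i)))]
  have hinner : ∀ m : Fin N,
      ∑ u ∈ Fintype.piFinset (fun _ : Fin n => Tbox k),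
        ∏ i, Real.sqrt (marg n k ε v i (u i) * marg n k ε (flipv v p0) i (u i))
      = ∏ i : Fin n, ∑ x ∈ Tbox k,
          Real.sqrt (marg n k ε v i x * marg n k ε (flipv v p0) i x) := by
    intro m
    rw [← Finset.prod_univ_sum (fun _ : Fin n => Tbox k)
      (fun i x => Real.sqrt (marg n k ε v i x * marg n k ε (flipv v p0) i x))]
  rw [Finset.prod_congr rfl (fun m _ => hinner m)]
  have hrow : ∏ i : Fin n, ∑ x ∈ Tbox k,
      Real.sqrt (marg n k ε v i x * marg n k ε (flipv v p0) i x)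
      = ∑ x ∈ Tbox k, Real.sqrt (marg n k ε v p0.1 x * marg n k ε (flipv v p0) p0.1 x) := by
    apply Finset.prod_eq_single_of_mem _ (Finset.mem_univ p0.1)
    intro i _ hi
    exact bhat_same hn hk hε0 hε1 (flipv_row_ne hi).symm
  rw [Finset.prod_congr rfl (fun m _ => hrow), Finset.prod_const, Finset.card_univ,
    Fintype.card_fin]
  exact pow_le_pow_left₀ hone (bhat_flip hn hk hε0 hε1 v p0) N

lemma minsum {α : Type*} (S : Finset α) (p q : α → ℝ)
    (hp : ∀ x ∈ S, 0 ≤ p x) (hq : ∀ x ∈ S, 0 ≤ q x)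
    (hp1 : ∑ x ∈ S, p x ≤ 1) (hq1 : ∑ x ∈ S, q x ≤ 1) :
    (∑ x ∈ S, Real.sqrt (p x * q x))^2 ≤ 2 * ∑ x ∈ S, min (p x) (q x) := by
  have hmin : ∀ x ∈ S, 0 ≤ min (p x) (q x) := fun x hx => le_min (hp x hx) (hq x hx)
  have hmax : ∀ x ∈ S, 0 ≤ max (p x) (q x) := fun x hx => le_trans (hp x hx) (le_max_left _ _)
  have hfact : ∀ x ∈ S, Real.sqrt (p x * q x)
      = Real.sqrt (min (p x) (q x)) * Real.sqrt (max (p x) (q x)) := by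
    intro x hx
    rw [← Real.sqrt_mul (hmin x hx), min_mul_max]
  rw [Finset.sum_congr rfl hfact]
  calc (∑ x ∈ S, Real.sqrt (min (p x) (q x)) * Real.sqrt (max (p x) (q x)))^2
      ≤ (∑ x ∈ S, Real.sqrt (min (p x) (q x))^2) * ∑ x ∈ S, Real.sqrt (max (p x) (q x))^2 :=
        Finset.sum_mul_sq_le_sq_mul_sq _ _ _
    _ = (∑ x ∈ S, min (p x) (q x)) * ∑ x ∈ S, max (p x) (q x) := by
        rw [Finset.sum_congr rfl (fun x hx => Real.sq_sqrt (hmin x hx)),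
          Finset.sum_congr rfl (fun x hx => Real.sq_sqrt (hmax x hx))]
    _ ≤ (∑ x ∈ S, min (p x) (q x)) * 2 := by
        apply mul_le_mul_of_nonneg_left _ (Finset.sum_nonneg hmin)
        calc ∑ x ∈ S, max (p x) (q x) ≤ ∑ x ∈ S, (p x + q x) := by
              apply Finset.sum_le_sum
              intro x hx
              exact max_le (le_add_of_nonneg_right (hq x hx)) (le_add_of_nonneg_left (hp x hx))
          _ = (∑ x ∈ S, p x) + ∑ x ∈ S, q x := Finset.sum_add_distrib
          _ ≤ 2 := by linarith
    _ = 2 * ∑ x ∈ S, min (p x) (q x) := mul_comm _ _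

lemma marg_sgn (hε0 : 0 ≤ ε) (j : Fin k) (i : Fin n) (b : Bool) :
    marg n k ε v i (sgn b * ((j:ℤ)+1)) =
      if b = v i j then (1+ε)/(2*(n:ℝ)*k) else (1-ε)/(2*(n:ℝ)*k) := by
  have hj : (j : ℕ) < k := j.isLt
  have hjc : ((j : Fin k) : ℤ) = (((j:ℕ) : ℕ) : ℤ) := by norm_cast
  have hidx : (⟨(j:ℕ), hj⟩ : Fin k) = j := by apply Fin.ext; rfl
  cases b
  · have hs : sgn false * ((j:ℤ)+1) = -((((j:ℕ)):ℤ)+1) := by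
      simp [sgn]
      try push_cast
      try ring
    rw [hs, marg_neg hj, hidx]
    cases hv : v i j
    · simp
    · simp
  · have hs : sgn true * ((j:ℤ)+1) = ((((j:ℕ)):ℤ)+1) := by
      simp [sgn]
      try push_cast
      try ring
    rw [hs, marg_pos hj, hidx]
    cases hv : v i j
    · simp
    · simp

/-- The point of `T^n` with unique nonzero coordinate `p.1` of value `sgn (w p.1 p.2)·(p.2+1)`. -/
def epoint (w : Fin n → Fin k → Bool) (p : Fin n × Fin k) : Fin n → ℤ :=
  fun i' => if i' = p.1 then sgn (w p.1 p.2) * ((p.2:ℤ)+1) else 0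

lemma sgn_natAbs (b : Bool) (j : Fin k) : (sgn b * ((j:ℤ)+1)).natAbs = (j:ℕ)+1 := by
  cases b <;> simp [sgn] <;> omega

lemma sgn_mul_ne_zero (b : Bool) (j : Fin k) : sgn b * ((j:ℤ)+1) ≠ 0 := by
  have : (0:ℤ) ≤ (j:ℤ) := by positivity
  cases b <;> simp [sgn] <;> omega

lemma expZ_marg (hn : 1 ≤ n) (hk : 1 ≤ k) (hε0 : 0 ≤ ε)
    (v w : Fin n → Fin k → Bool) :
    expZ n k (marg n k ε v) (hyp n k w)
      = (1 - 1/(n:ℝ))^(n-1) *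
        ∑ p : Fin n × Fin k,
          (if w p.1 p.2 = v p.1 p.2 then (1+ε)/(2*(n:ℝ)*k) else (1-ε)/(2*(n:ℝ)*k)) := by
  classical
  unfold expZ hyp
  simp only [mul_ite, mul_one, mul_zero]
  rw [← Finset.sum_filter]
  have himage : (Fintype.piFinset (fun _ : Fin n => Tbox k)).filter
      (fun t => ∃ i : Fin n, ∃ j : Fin k,
        (∀ i' : Fin n, i' ≠ i → t i' = 0) ∧ t i = sgn (w i j) * ((j : ℤ) + 1))
      = Finset.image (epoint w) Finset.univ := by
    ext t
    simp only [Finset.mem_filter, Finset.mem_image, Finset.mem_univ, true_and]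
    constructor
    · rintro ⟨hbox, i, j, hz, hv⟩
      refine ⟨(i, j), ?_⟩
      funext i'
      by_cases hi' : i' = i
      · subst hi'; simp only [epoint, if_pos rfl]; exact hv.symm
      · simp only [epoint, if_neg hi']; exact (hz i' hi').symm
    · rintro ⟨p, rfl⟩
      refine ⟨?_, p.1, p.2, fun i' hi' => by simp [epoint, hi'], by simp [epoint]⟩
      rw [Fintype.mem_piFinset]
      intro i'
      by_cases hi' : i' = p.1
      · subst hi'
        simp only [epoint, if_pos rfl, Tbox, Finset.mem_Icc]
        have h2 : (p.2 : ℤ) + 1 ≤ k := by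
          have := p.2.isLt; omega
        cases hb : w p.1 p.2 <;> simp [sgn] <;> omega
      · simp only [epoint, if_neg hi', Tbox, Finset.mem_Icc]
        constructor <;> omega
  rw [himage, Finset.sum_image ?hinj]
  case hinj =>
    intro p _ q _ hpq
    have h1 : p.1 = q.1 := by
      by_contra hne
      have h := congrFun hpq p.1
      simp only [epoint] at h
      rw [if_true, if_neg hne] at h
      exact sgn_mul_ne_zero _ _ h
    have h2 : p.2 = q.2 := by
      have h := congrFun hpq p.1
      simp only [epoint] at h
      rw [if_true, if_pos h1] at h
      have habs := congrArg Int.natAbs h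
      rw [sgn_natAbs, sgn_natAbs] at habs
      exact Fin.ext (by omega)
    exact Prod.ext h1 h2
  rw [Finset.mul_sum]
  apply Finset.sum_congr rfl
  intro p _
  have hsplit : ∏ i, marg n k ε v i (epoint w p i)
      = marg n k ε v p.1 (epoint w p p.1) *
        ∏ i ∈ Finset.univ.erase p.1, marg n k ε v i (epoint w p i) :=
    (Finset.mul_prod_erase Finset.univ _ (Finset.mem_univ p.1)).symm
  rw [hsplit]
  have herase : ∀ i ∈ Finset.univ.erase p.1, marg n k ε v i (epoint w p i) = 1 - 1/(n:ℝ) := by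
    intro i hi
    have hne : i ≠ p.1 := (Finset.mem_erase.mp hi).1
    simp only [epoint, if_neg hne]
    exact marg_zero i
  rw [Finset.prod_congr rfl herase, Finset.prod_const, Finset.card_erase_of_mem (Finset.mem_univ p.1),
    Finset.card_univ, Fintype.card_fin]
  have hval : epoint w p p.1 = sgn (w p.1 p.2) * ((p.2:ℤ)+1) := by simp [epoint]
  rw [hval, marg_sgn hε0]
  ring

lemma Cn_nonneg (hn : 1 ≤ n) : (0:ℝ) ≤ (1 - 1/(n:ℝ))^(n-1) := by
  apply pow_nonneg
  have : 1/(n:ℝ) ≤ 1 := by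
    rw [div_le_one (by positivity)]; exact_mod_cast hn
  linarith

lemma gap_eq (hn : 1 ≤ n) (hk : 1 ≤ k) (hε0 : 0 ≤ ε)
    (v w : Fin n → Fin k → Bool) :
    expZ n k (marg n k ε v) (hyp n k v) - expZ n k (marg n k ε v) (hyp n k w)
      = (1 - 1/(n:ℝ))^(n-1) * (ε/((n:ℝ)*k)) * (hamming v w : ℝ) := by
  classical
  rw [expZ_marg hn hk hε0 v v, expZ_marg hn hk hε0 v w, ← mul_sub, ← Finset.sum_sub_distrib]
  have hterm : ∀ p : Fin n × Fin k,
      ((if v p.1 p.2 = v p.1 p.2 then (1+ε)/(2*(n:ℝ)*k) else (1-ε)/(2*(n:ℝ)*k)) -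
       (if w p.1 p.2 = v p.1 p.2 then (1+ε)/(2*(n:ℝ)*k) else (1-ε)/(2*(n:ℝ)*k)))
      = if v p.1 p.2 ≠ w p.1 p.2 then ε/((n:ℝ)*k) else 0 := by
    intro p
    rw [if_pos rfl]
    by_cases h : w p.1 p.2 = v p.1 p.2
    · rw [if_pos h, if_neg (by simp [h.symm])]
      ring
    · rw [if_neg h, if_pos (fun hc => h hc.symm)]
      have hn0 : (n:ℝ) ≠ 0 := by positivity
      have hk0 : (k:ℝ) ≠ 0 := by positivity
      field_simp
      ring
  rw [Finset.sum_congr rfl (fun p _ => hterm p)]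
  rw [Finset.sum_ite, Finset.sum_const, Finset.sum_const_zero, add_zero, nsmul_eq_mul]
  unfold hamming
  ring

lemma optZ_eq (hn : 1 ≤ n) (hk : 1 ≤ k) (hε0 : 0 ≤ ε)
    (v : Fin n → Fin k → Bool) :
    optZ n k ε v = expZ n k (marg n k ε v) (hyp n k v) := by
  apply le_antisymm
  · apply ciSup_le
    intro w
    have h := gap_eq hn hk hε0 v w
    have hpos : 0 ≤ (1 - 1/(n:ℝ))^(n-1) * (ε/((n:ℝ)*k)) * (hamming v w : ℝ) := by
      apply mul_nonneg (mul_nonneg (Cn_nonneg hn) (by positivity)) (by positivity)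
    linarith
  · exact le_ciSup (f := fun w => expZ n k (marg n k ε v) (hyp n k w))
      (Set.Finite.bddAbove (Set.finite_range _)) v

lemma Cn_ge (hn : 1 ≤ n) : (1/3 : ℝ) ≤ (1 - 1/(n:ℝ))^(n-1) := by
  rcases eq_or_lt_of_le hn with h1 | h2
  · rw [← h1]; norm_num
  · have hm1 : 1 ≤ n - 1 := by omega
    set m : ℕ := n - 1 with hmdef
    have hmn : n = m + 1 := by omega
    have hmR : (1:ℝ) ≤ (m:ℝ) := by exact_mod_cast hm1
    have hmpos : (0:ℝ) < (m:ℝ) := by linarith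
    have hb : (1 - 1/(n:ℝ)) = (1 + 1/(m:ℝ))⁻¹ := by
      rw [hmn]; push_cast; field_simp; ring
    rw [hb, inv_pow]
    have hexp : (1 + 1/(m:ℝ))^m ≤ 3 := by
      have step1 : (1 + 1/(m:ℝ))^m ≤ (Real.exp (1/(m:ℝ)))^m := by
        apply pow_le_pow_left₀ (by positivity)
        have := Real.add_one_le_exp (1/(m:ℝ))
        linarith
      have step2 : (Real.exp (1/(m:ℝ)))^m = Real.exp ((m:ℝ) * (1/(m:ℝ))) := by
        rw [Real.exp_nat_mul]
      have step3 : (m:ℝ) * (1/(m:ℝ)) = 1 := by field_simp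
      have step4 : Real.exp 1 < 3 := by
        have := Real.exp_one_lt_d9
        linarith
      rw [step2, step3] at step1
      linarith
    have hpos : (0:ℝ) < (1 + 1/(m:ℝ))^m := by positivity
    calc (1/3 : ℝ) = (3:ℝ)⁻¹ := by norm_num
      _ ≤ ((1 + 1/(m:ℝ))^m)⁻¹ := by
          apply inv_anti₀ hpos hexp

lemma pair_bound (hn : 1 ≤ n) (hk : 1 ≤ k) (hε0 : 0 < ε) (hε2 : ε < 1/2) {N : ℕ}
    (hN : (N:ℝ) ≤ 1/2 * ((n:ℝ)*(k:ℝ))/ε^2)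
    (A : (Fin N → Fin n → ℤ) → (Fin n → Fin k → Bool) → ℝ)
    (hA : ∀ s, (∀ w, 0 ≤ A s w) ∧ ∑ w : Fin n → Fin k → Bool, A s w = 1)
    (p : Fin n × Fin k) (v : Fin n → Fin k → Bool) :
    (1/8 : ℝ) ≤ (∑ s ∈ sampleBox n k N, sampleP n k N ε v s *
        ∑ w : Fin n → Fin k → Bool, A s w * (if v p.1 p.2 ≠ w p.1 p.2 then (1:ℝ) else 0))
      + ∑ s ∈ sampleBox n k N, sampleP n k N ε (flipv v p) s *
        ∑ w : Fin n → Fin k → Bool, A s w * (if (flipv v p) p.1 p.2 ≠ w p.1 p.2 then (1:ℝ) else 0) := by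
  have hε0' : 0 ≤ ε := hε0.le
  have hε1 : ε ≤ 1 := by linarith
  have hnR : (1:ℝ) ≤ n := by exact_mod_cast hn
  have hkR : (1:ℝ) ≤ k := by exact_mod_cast hk
  have hnk : (1:ℝ) ≤ (n:ℝ)*k := by nlinarith
  -- Bernoulli + Bhattacharyya: sum of sqrt ≥ 1/2
  have hber : (1/2 : ℝ) ≤ (1 - ε^2/((n:ℝ)*k))^N := by
    have hx : (-2:ℝ) ≤ -(ε^2/((n:ℝ)*k)) := by
      have h1 : ε^2/((n:ℝ)*k) ≤ 1 := by
        rw [div_le_one (by positivity)]; nlinarith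
      linarith
    have hberpow := one_add_mul_le_pow hx N
    have hNe : (N:ℝ) * (ε^2/((n:ℝ)*k)) ≤ 1/2 := by
      have h := mul_le_mul_of_nonneg_right hN (by positivity : (0:ℝ) ≤ ε^2/((n:ℝ)*k))
      have heq : 1/2 * ((n:ℝ)*k)/ε^2 * (ε^2/((n:ℝ)*k)) = 1/2 := by
        field_simp
      rw [heq] at h
      exact h
    have : 1 + (N:ℝ) * -(ε^2/((n:ℝ)*k)) ≤ (1 + -(ε^2/((n:ℝ)*k)))^N := hberpow
    have heq : (1:ℝ) + -(ε^2/((n:ℝ)*k)) = 1 - ε^2/((n:ℝ)*k) := by ring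
    rw [heq] at this
    nlinarith
  have hbh := bhat_sample hn hk hε0' hε1 (N := N) v p
  have hsq : (1/2 : ℝ) ≤ ∑ s ∈ sampleBox n k N,
      Real.sqrt (sampleP n k N ε v s * sampleP n k N ε (flipv v p) s) :=
    le_trans hber hbh
  have hms := minsum (sampleBox n k N) (sampleP n k N ε v) (sampleP n k N ε (flipv v p))
    (fun s _ => sampleP_nonneg hn hε0' hε1 v s)
    (fun s _ => sampleP_nonneg hn hε0' hε1 (flipv v p) s)
    (le_of_eq (sum_sampleP hn hk v)) (le_of_eq (sum_sampleP hn hk (flipv v p)))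
  have hminsum : (1/8 : ℝ) ≤ ∑ s ∈ sampleBox n k N,
      min (sampleP n k N ε v s) (sampleP n k N ε (flipv v p) s) := by
    nlinarith
  refine le_trans hminsum ?_
  rw [← Finset.sum_add_distrib]
  apply Finset.sum_le_sum
  intro s _
  have ha0 : (0:ℝ) ≤ ∑ w : Fin n → Fin k → Bool,
      A s w * (if v p.1 p.2 ≠ w p.1 p.2 then (1:ℝ) else 0) := by
    apply Finset.sum_nonneg
    intro w _
    exact mul_nonneg ((hA s).1 w) (by positivity)
  have hb0 : (0:ℝ) ≤ ∑ w : Fin n → Fin k → Bool,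
      A s w * (if (flipv v p) p.1 p.2 ≠ w p.1 p.2 then (1:ℝ) else 0) := by
    apply Finset.sum_nonneg
    intro w _
    exact mul_nonneg ((hA s).1 w) (by positivity)
  have hab : (∑ w : Fin n → Fin k → Bool,
        A s w * (if v p.1 p.2 ≠ w p.1 p.2 then (1:ℝ) else 0))
      + (∑ w : Fin n → Fin k → Bool,
        A s w * (if (flipv v p) p.1 p.2 ≠ w p.1 p.2 then (1:ℝ) else 0)) = 1 := by
    rw [← Finset.sum_add_distrib]
    have hterm : ∀ w : Fin n → Fin k → Bool,
        A s w * (if v p.1 p.2 ≠ w p.1 p.2 then (1:ℝ) else 0)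
        + A s w * (if (flipv v p) p.1 p.2 ≠ w p.1 p.2 then (1:ℝ) else 0) = A s w := by
      intro w
      have h1 : flipv v p p.1 p.2 = !(v p.1 p.2) := flipv_at v p
      rw [h1]
      cases hv : v p.1 p.2 <;> cases hw : w p.1 p.2 <;> simp
    rw [Finset.sum_congr rfl (fun w _ => hterm w)]
    exact (hA s).2
  have hPm : min (sampleP n k N ε v s) (sampleP n k N ε (flipv v p) s) ≤ sampleP n k N ε v s :=
    min_le_left _ _
  have hQm : min (sampleP n k N ε v s) (sampleP n k N ε (flipv v p) s)
      ≤ sampleP n k N ε (flipv v p) s := min_le_right _ _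
  set Ps := sampleP n k N ε v s with hPs
  set Qs := sampleP n k N ε (flipv v p) s with hQs
  set a := ∑ w : Fin n → Fin k → Bool,
      A s w * (if v p.1 p.2 ≠ w p.1 p.2 then (1:ℝ) else 0) with ha
  set b := ∑ w : Fin n → Fin k → Bool,
      A s w * (if (flipv v p) p.1 p.2 ≠ w p.1 p.2 then (1:ℝ) else 0) with hb
  have h1 := mul_le_mul_of_nonneg_right hPm ha0
  have h2 := mul_le_mul_of_nonneg_right hQm hb0
  have h3 : min Ps Qs * (a + b) = min Ps Qs := by rw [hab, mul_one]
  have h4 : min Ps Qs * (a + b) = min Ps Qs * a + min Ps Qs * b := mul_add _ _ _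
  linarith

lemma R_eq (hn : 1 ≤ n) (hk : 1 ≤ k) (hε0 : 0 ≤ ε) {N : ℕ}
    (A : (Fin N → Fin n → ℤ) → (Fin n → Fin k → Bool) → ℝ)
    (v : Fin n → Fin k → Bool) :
    ∑ s ∈ sampleBox n k N, sampleP n k N ε v s *
        ∑ w : Fin n → Fin k → Bool,
          A s w * (optZ n k ε v - expZ n k (marg n k ε v) (hyp n k w))
    = ((1 - 1/(n:ℝ))^(n-1) * (ε/((n:ℝ)*k))) *
        ∑ p : Fin n × Fin k, ∑ s ∈ sampleBox n k N, sampleP n k N ε v s *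
          ∑ w : Fin n → Fin k → Bool,
            A s w * (if v p.1 p.2 ≠ w p.1 p.2 then (1:ℝ) else 0) := by
  classical
  have hkey : ∀ w, optZ n k ε v - expZ n k (marg n k ε v) (hyp n k w)
      = ((1 - 1/(n:ℝ))^(n-1) * (ε/((n:ℝ)*k))) * (hamming v w : ℝ) := by
    intro w
    rw [optZ_eq hn hk hε0, gap_eq hn hk hε0]
  have hham : ∀ w : Fin n → Fin k → Bool, (hamming v w : ℝ)
      = ∑ p : Fin n × Fin k, (if v p.1 p.2 ≠ w p.1 p.2 then (1:ℝ) else 0) := by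
    intro w
    unfold hamming
    rw [Finset.card_filter]
    push_cast
    rfl
  simp only [hkey, hham, Finset.mul_sum]
  calc ∑ s ∈ sampleBox n k N, ∑ w : Fin n → Fin k → Bool, ∑ p : Fin n × Fin k,
        sampleP n k N ε v s * (A s w * ((1 - 1/(n:ℝ))^(n-1) * (ε/((n:ℝ)*k)) *
          (if v p.1 p.2 ≠ w p.1 p.2 then (1:ℝ) else 0)))
      = ∑ s ∈ sampleBox n k N, ∑ p : Fin n × Fin k, ∑ w : Fin n → Fin k → Bool,
        sampleP n k N ε v s * (A s w * ((1 - 1/(n:ℝ))^(n-1) * (ε/((n:ℝ)*k)) *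
          (if v p.1 p.2 ≠ w p.1 p.2 then (1:ℝ) else 0))) :=
        Finset.sum_congr rfl (fun s _ => Finset.sum_comm)
    _ = ∑ p : Fin n × Fin k, ∑ s ∈ sampleBox n k N, ∑ w : Fin n → Fin k → Bool,
        sampleP n k N ε v s * (A s w * ((1 - 1/(n:ℝ))^(n-1) * (ε/((n:ℝ)*k)) *
          (if v p.1 p.2 ≠ w p.1 p.2 then (1:ℝ) else 0))) := Finset.sum_comm
    _ = ∑ p : Fin n × Fin k, ∑ s ∈ sampleBox n k N, ∑ w : Fin n → Fin k → Bool,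
        (1 - 1/(n:ℝ))^(n-1) * (ε/((n:ℝ)*k)) * (sampleP n k N ε v s *
          (A s w * (if v p.1 p.2 ≠ w p.1 p.2 then (1:ℝ) else 0))) := by
        apply Finset.sum_congr rfl; intro p _
        apply Finset.sum_congr rfl; intro s _
        apply Finset.sum_congr rfl; intro w _
        ring

noncomputable def Fq (n k N : ℕ) (ε : ℝ)
    (A : (Fin N → Fin n → ℤ) → (Fin n → Fin k → Bool) → ℝ)
    (p : Fin n × Fin k) (v : Fin n → Fin k → Bool) : ℝ :=
  ∑ s ∈ sampleBox n k N, sampleP n k N ε v s *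
    ∑ w : Fin n → Fin k → Bool, A s w * (if v p.1 p.2 ≠ w p.1 p.2 then (1:ℝ) else 0)

lemma pair_bound' (hn : 1 ≤ n) (hk : 1 ≤ k) (hε0 : 0 < ε) (hε2 : ε < 1/2) {N : ℕ}
    (hN : (N:ℝ) ≤ 1/2 * ((n:ℝ)*(k:ℝ))/ε^2)
    (A : (Fin N → Fin n → ℤ) → (Fin n → Fin k → Bool) → ℝ)
    (hA : ∀ s, (∀ w, 0 ≤ A s w) ∧ ∑ w : Fin n → Fin k → Bool, A s w = 1)
    (p : Fin n × Fin k) (v : Fin n → Fin k → Bool) :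
    (1/8 : ℝ) ≤ Fq n k N ε A p v + Fq n k N ε A p (flipv v p) := by
  unfold Fq
  exact pair_bound hn hk hε0 hε2 hN A hA p v

lemma R_eq' (hn : 1 ≤ n) (hk : 1 ≤ k) (hε0 : 0 ≤ ε) {N : ℕ}
    (A : (Fin N → Fin n → ℤ) → (Fin n → Fin k → Bool) → ℝ)
    (v : Fin n → Fin k → Bool) :
    ∑ s ∈ sampleBox n k N, sampleP n k N ε v s *
        ∑ w : Fin n → Fin k → Bool,
          A s w * (optZ n k ε v - expZ n k (marg n k ε v) (hyp n k w))
    = ((1 - 1/(n:ℝ))^(n-1) * (ε/((n:ℝ)*k))) * ∑ p : Fin n × Fin k, Fq n k N ε A p v := by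
  unfold Fq
  exact R_eq hn hk hε0 A v

end LB

theorem stmt1 :
    ∃ c c' : ℝ, 0 < c ∧ 0 < c' ∧
      ∀ n k : ℕ, 1 ≤ n → 1 ≤ k →
      ∀ ε : ℝ, ε ∈ Set.Ioo (0 : ℝ) (1 / 2) →
      ∀ N : ℕ, (N : ℝ) ≤ c * (n * k : ℝ) / ε ^ 2 →
      ∀ A : (Fin N → Fin n → ℤ) → (Fin n → Fin k → Bool) → ℝ,
        (∀ s, (∀ w, 0 ≤ A s w) ∧ ∑ w : Fin n → Fin k → Bool, A s w = 1) →
        ∃ v : Fin n → Fin k → Bool,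
          c' * ε ≤
            ∑ s ∈ sampleBox n k N, sampleP n k N ε v s *
              ∑ w : Fin n → Fin k → Bool,
                A s w * (optZ n k ε v - expZ n k (marg n k ε v) (hyp n k w)) := by
  classical
  refine ⟨1/2, 1/48, by norm_num, by norm_num, ?_⟩
  intro n k hn hk ε hε N hN A hA
  obtain ⟨hε0, hε2⟩ := hε
  have hε0' : 0 ≤ ε := hε0.le
  have hε1 : ε ≤ 1 := by linarith
  have hnR : (1:ℝ) ≤ (n:ℝ) := by exact_mod_cast hn
  have hkR : (1:ℝ) ≤ (k:ℝ) := by exact_mod_cast hk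
  have hnk0 : (0:ℝ) < (n:ℝ)*(k:ℝ) := by nlinarith
  have hN' : (N:ℝ) ≤ 1/2 * ((n:ℝ)*(k:ℝ))/ε^2 := by
    calc (N:ℝ) ≤ 1/2 * ((n*k : ℕ):ℝ)/ε^2 := by push_cast; push_cast at hN; linarith
      _ = 1/2 * ((n:ℝ)*(k:ℝ))/ε^2 := by push_cast; ring
  -- sum over v of Fq via flip involution
  have hflip : ∀ p : Fin n × Fin k,
      ∑ v : Fin n → Fin k → Bool, LB.Fq n k N ε A p (flipv v p)
        = ∑ v : Fin n → Fin k → Bool, LB.Fq n k N ε A p v := by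
    intro p
    exact Finset.sum_nbij' (fun v => flipv v p) (fun v => flipv v p)
      (fun v _ => Finset.mem_univ _) (fun v _ => Finset.mem_univ _)
      (fun v _ => LB.flipv_invol v p) (fun v _ => LB.flipv_invol v p)
      (fun v _ => rfl)
  have hFsum : ∀ p : Fin n × Fin k,
      (Fintype.card (Fin n → Fin k → Bool) : ℝ) * (1/16)
        ≤ ∑ v : Fin n → Fin k → Bool, LB.Fq n k N ε A p v := by
    intro p
    have hsum : ∑ _v : Fin n → Fin k → Bool, (1/8 : ℝ) ≤
        ∑ v : Fin n → Fin k → Bool, (LB.Fq n k N ε A p v + LB.Fq n k N ε A p (flipv v p)) :=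
      Finset.sum_le_sum (fun v _ => LB.pair_bound' hn hk hε0 hε2 hN' A hA p v)
    rw [Finset.sum_add_distrib, hflip p, Finset.sum_const, Finset.card_univ,
      nsmul_eq_mul] at hsum
    linarith
  -- assemble
  set CardR : ℝ := (Fintype.card (Fin n → Fin k → Bool) : ℝ) with hCardR
  have hCard0 : 0 < CardR := by
    rw [hCardR]
    exact_mod_cast Fintype.card_pos
  have hX : ((n:ℝ)*(k:ℝ)) * (CardR * (1/16))
      ≤ ∑ p : Fin n × Fin k, ∑ v : Fin n → Fin k → Bool, LB.Fq n k N ε A p v := by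
    calc ((n:ℝ)*(k:ℝ)) * (CardR * (1/16))
        = ∑ _p : Fin n × Fin k, CardR * (1/16) := by
          rw [Finset.sum_const, Finset.card_univ, Fintype.card_prod, Fintype.card_fin,
            Fintype.card_fin, nsmul_eq_mul]
          push_cast
          ring
      _ ≤ ∑ p : Fin n × Fin k, ∑ v : Fin n → Fin k → Bool, LB.Fq n k N ε A p v :=
          Finset.sum_le_sum (fun p _ => hFsum p)
  have hc0 : (0:ℝ) ≤ (1 - 1/(n:ℝ))^(n-1) * (ε/((n:ℝ)*k)) :=
    mul_nonneg (LB.Cn_nonneg hn) (by positivity)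
  have hc1 : (1/3:ℝ) * (ε/((n:ℝ)*k)) ≤ (1 - 1/(n:ℝ))^(n-1) * (ε/((n:ℝ)*k)) :=
    mul_le_mul_of_nonneg_right (LB.Cn_ge hn) (by positivity)
  have hmain : ∑ _v : Fin n → Fin k → Bool, (1/48 * ε)
      ≤ ∑ v : Fin n → Fin k → Bool,
          ∑ s ∈ sampleBox n k N, sampleP n k N ε v s *
            ∑ w : Fin n → Fin k → Bool,
              A s w * (optZ n k ε v - expZ n k (marg n k ε v) (hyp n k w)) := by
    have hR : ∀ v ∈ (Finset.univ : Finset (Fin n → Fin k → Bool)),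
        (∑ s ∈ sampleBox n k N, sampleP n k N ε v s *
          ∑ w : Fin n → Fin k → Bool,
            A s w * (optZ n k ε v - expZ n k (marg n k ε v) (hyp n k w)))
        = ((1 - 1/(n:ℝ))^(n-1) * (ε/((n:ℝ)*k))) * ∑ p : Fin n × Fin k, LB.Fq n k N ε A p v :=
      fun v _ => LB.R_eq' hn hk hε0' A v
    rw [Finset.sum_congr rfl hR]
    have hXnn : (0:ℝ) ≤ ((n:ℝ)*(k:ℝ)) * (CardR * (1/16)) := by positivity
    calc ∑ _v : Fin n → Fin k → Bool, (1/48 * ε)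
        = CardR * (1/48 * ε) := by
          rw [Finset.sum_const, Finset.card_univ, nsmul_eq_mul]
      _ = (1/3 * (ε/((n:ℝ)*k))) * (((n:ℝ)*(k:ℝ)) * (CardR * (1/16))) := by
          field_simp
          ring
      _ ≤ ((1 - 1/(n:ℝ))^(n-1) * (ε/((n:ℝ)*k))) * (((n:ℝ)*(k:ℝ)) * (CardR * (1/16))) :=
          mul_le_mul_of_nonneg_right hc1 hXnn
      _ ≤ ((1 - 1/(n:ℝ))^(n-1) * (ε/((n:ℝ)*k))) *
            ∑ p : Fin n × Fin k, ∑ v : Fin n → Fin k → Bool, LB.Fq n k N ε A p v :=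
          mul_le_mul_of_nonneg_left hX hc0
      _ = ∑ v : Fin n → Fin k → Bool,
            ((1 - 1/(n:ℝ))^(n-1) * (ε/((n:ℝ)*k))) * ∑ p : Fin n × Fin k, LB.Fq n k N ε A p v := by
          rw [Finset.sum_comm, Finset.mul_sum]
  obtain ⟨v, _, hv⟩ := Finset.exists_le_of_sum_le Finset.univ_nonempty hmain
  exact ⟨v, hv⟩
end

section
/- Let T = {0, ±1, …, ±k}, and for v ∈ {±1}^{n×k} let h^v: T^n → {0,1} be defined by h^v(t) = 1 iff t has exactly one nonzero coordinate, namely coordinate i equal to v_{i,j}·j for some j ∈ [k], and let D^v be the product distribution on T^n whose i-th marginal puts mass 1−1/n on 0, mass (1+ε)/(2nk) on v_{i,j}·j and mass (1−ε)/(2nk) on −v_{i,j}·j for each j ∈ [k]. Then for all v, v′ ∈ {±1}^{n×k}, h^v(D^v) − h^{v′}(D^v) = (1−1/n)^{n−1} · (ε/(nk)) · d(v, v′), where d(v, v′) is the Hamming distance between v and v′. -/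
/-!
STATEMENT 2: exact loss of choosing `h^{v'}` when the truth is `D^v`:
`h^v(D^v) − h^{v'}(D^v) = (1−1/n)^{n−1} · (ε/(nk)) · d(v,v')`.
-/
-- point with single nonzero coordinate
def tpt (n k : ℕ) (w : Fin n → Fin k → Bool) (p : Fin n × Fin k) : Fin n → ℤ :=
  fun i' => if i' = p.1 then sgn (w p.1 p.2) * ((p.2 : ℤ) + 1) else 0

lemma marg_zero (n k : ℕ) (ε : ℝ) (v : Fin n → Fin k → Bool) (i : Fin n) :
    marg n k ε v i 0 = 1 - 1 / (n : ℝ) := by simp [marg]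

lemma marg_sgn (n k : ℕ) (ε : ℝ) (v : Fin n → Fin k → Bool) (i : Fin n) (j : Fin k) (b : Bool) :
    marg n k ε v i (sgn b * ((j : ℤ) + 1)) =
      if v i j = b then (1 + ε) / (2 * n * k) else (1 - ε) / (2 * n * k) := by
  have hj : j.val < k := j.isLt
  have hna : (sgn b * ((j : ℤ) + 1)).natAbs = j.val + 1 := by
    cases b <;> simp [sgn] <;> omega
  have hne : (sgn b * ((j : ℤ) + 1)) ≠ 0 := by
    cases b <;> simp [sgn] <;> omega
  have hx : 1 ≤ (sgn b * ((j : ℤ) + 1)).natAbs ∧ (sgn b * ((j : ℤ) + 1)).natAbs ≤ k := by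
    rw [hna]; omega
  rw [marg, if_neg hne, dif_pos hx]
  have hidx : (⟨(sgn b * ((j : ℤ) + 1)).natAbs - 1, by omega⟩ : Fin k) = j := by
    apply Fin.ext; simp [hna]
  rw [hidx]
  have hpos : (0 < sgn b * ((j : ℤ) + 1)) = (b = true) := by
    cases b <;> simp [sgn] <;> omega
  simp only [hpos]
  cases b <;> cases hvb : v i j <;> simp [hvb]

lemma tpt_mem (n k : ℕ) (w : Fin n → Fin k → Bool) (p : Fin n × Fin k) :
    tpt n k w p ∈ Fintype.piFinset (fun _ : Fin n => Tbox k) := by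
  rw [Fintype.mem_piFinset]
  intro i
  simp only [Tbox, Finset.mem_Icc, tpt]
  have := p.2.isLt
  split
  · cases w p.1 p.2 <;> simp [sgn] <;> omega
  · omega

lemma hyp_tpt (n k : ℕ) (w : Fin n → Fin k → Bool) (p : Fin n × Fin k) :
    (∃ i : Fin n, ∃ j : Fin k,
      (∀ i' : Fin n, i' ≠ i → tpt n k w p i' = 0) ∧
        tpt n k w p i = sgn (w i j) * ((j : ℤ) + 1)) := by
  refine ⟨p.1, p.2, fun i' hi' => if_neg hi', by simp [tpt]⟩

lemma prod_marg_tpt (n k : ℕ) (ε : ℝ) (v w : Fin n → Fin k → Bool) (p : Fin n × Fin k) :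
    (∏ i, marg n k ε v i (tpt n k w p i)) =
      (1 - 1 / (n : ℝ)) ^ (n - 1) *
        (if v p.1 p.2 = w p.1 p.2 then (1 + ε) / (2 * n * k) else (1 - ε) / (2 * n * k)) := by
  rw [← Finset.prod_compl_mul_prod {p.1}]
  have h1 : ∏ i ∈ ({p.1} : Finset (Fin n))ᶜ, marg n k ε v i (tpt n k w p i)
      = (1 - 1 / (n : ℝ)) ^ (n - 1) := by
    rw [Finset.prod_congr rfl (fun i hi => ?_), Finset.prod_const]
    · congr 1
      rw [Finset.card_compl, Finset.card_singleton, Fintype.card_fin]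
    · simp only [Finset.mem_compl, Finset.mem_singleton] at hi
      rw [tpt, if_neg hi, marg_zero]
  rw [h1, Finset.prod_singleton]
  congr 1
  have : tpt n k w p p.1 = sgn (w p.1 p.2) * ((p.2 : ℤ) + 1) := by simp [tpt]
  rw [this, marg_sgn]

lemma tpt_inj (n k : ℕ) (w : Fin n → Fin k → Bool) (p q : Fin n × Fin k)
    (h : tpt n k w p = tpt n k w q) : p = q := by
  have hs : ∀ b : Bool, sgn b * ((p.2 : ℤ) + 1) ≠ 0 := by
    intro b; cases b <;> simp [sgn] <;> omega
  have h1 : p.1 = q.1 := by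
    by_contra hne
    have := congrFun h p.1
    rw [tpt, tpt, if_pos rfl, if_neg hne] at this
    exact hs _ this
  have h2 := congrFun h p.1
  simp only [tpt] at h2
  simp only [if_true] at h2
  rw [if_pos h1] at h2
  have hsn : ∀ b : Bool, (sgn b).natAbs = 1 := by intro b; cases b <;> rfl
  have hval : ((p.2 : ℤ) + 1).natAbs = ((q.2 : ℤ) + 1).natAbs := by
    have := congrArg Int.natAbs h2
    rwa [Int.natAbs_mul, Int.natAbs_mul, hsn, hsn, one_mul, one_mul] at this
  have h2' : (p.2 : ℤ) = (q.2 : ℤ) := by omega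
  exact Prod.ext h1 (Fin.ext (by exact_mod_cast h2'))

lemma tpt_surj (n k : ℕ) (w : Fin n → Fin k → Bool) (t : Fin n → ℤ)
    (h : ∃ i : Fin n, ∃ j : Fin k,
      (∀ i' : Fin n, i' ≠ i → t i' = 0) ∧ t i = sgn (w i j) * ((j : ℤ) + 1)) :
    ∃ p : Fin n × Fin k, tpt n k w p = t := by
  obtain ⟨i, j, hz, hi⟩ := h
  refine ⟨(i, j), funext fun i' => ?_⟩
  rw [tpt]
  by_cases hc : i' = i
  · subst hc; simp [hi]
  · simp [hc, hz i' hc]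

lemma expZ_hyp (n k : ℕ) (ε : ℝ) (v w : Fin n → Fin k → Bool) :
    expZ n k (marg n k ε v) (hyp n k w) =
      (1 - 1 / (n : ℝ)) ^ (n - 1) *
        ∑ p : Fin n × Fin k,
          (if v p.1 p.2 = w p.1 p.2 then (1 + ε) / (2 * n * k) else (1 - ε) / (2 * n * k)) := by
  classical
  rw [expZ]
  rw [← Finset.sum_subset (s₁ := Finset.image (tpt n k w) Finset.univ)
      (fun t ht => by
        obtain ⟨p, _, rfl⟩ := Finset.mem_image.mp ht
        exact tpt_mem n k w p)
      (fun t _ hnt => by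
        rw [hyp, if_neg, mul_zero]
        intro hP
        obtain ⟨p, hp⟩ := tpt_surj n k w t hP
        exact hnt (Finset.mem_image.mpr ⟨p, Finset.mem_univ p, hp⟩))]
  rw [Finset.sum_image (fun a _ b _ hab => tpt_inj n k w a b hab)]
  rw [Finset.mul_sum]
  refine Finset.sum_congr rfl fun p _ => ?_
  rw [hyp, if_pos (hyp_tpt n k w p), mul_one, prod_marg_tpt]


theorem stmt2 (n k : ℕ) (hn : 1 ≤ n) (hk : 1 ≤ k) (ε : ℝ) (hε : ε ∈ Set.Ioo (0 : ℝ) 1)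
    (v v' : Fin n → Fin k → Bool) :
    expZ n k (marg n k ε v) (hyp n k v) - expZ n k (marg n k ε v) (hyp n k v')
      = (1 - 1 / (n : ℝ)) ^ (n - 1) * (ε / (n * k)) * (hamming v v' : ℝ) := by
  rw [expZ_hyp n k ε v v, expZ_hyp n k ε v v', ← mul_sub, ← Finset.sum_sub_distrib]
  have hn0 : (n : ℝ) ≠ 0 := by positivity
  have hk0 : (k : ℝ) ≠ 0 := by
    have : 0 < k := hk; positivity
  have key : ∀ p : Fin n × Fin k,
      ((if v p.1 p.2 = v p.1 p.2 then (1 + ε) / (2 * n * k) else (1 - ε) / (2 * n * k))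
        - (if v p.1 p.2 = v' p.1 p.2 then (1 + ε) / (2 * n * k) else (1 - ε) / (2 * n * k)))
      = (if v p.1 p.2 ≠ v' p.1 p.2 then ε / (n * k) else 0) := by
    intro p
    by_cases hc : v p.1 p.2 = v' p.1 p.2 <;> simp [hc] <;> field_simp <;> ring
  rw [Finset.sum_congr rfl (fun p _ => key p), Finset.sum_ite, Finset.sum_const,
    Finset.sum_const, smul_zero, add_zero, hamming]
  simp only [nsmul_eq_mul]
  ring
end

section
/- Let T = {0, ±1, …, ±k} and, for v ∈ {±1}^{n×k}, let D^v be the product distribution on T^n whose i-th marginal puts mass 1−1/n on 0, mass (1+ε)/(2nk) on v_{i,j}·j and mass (1−ε)/(2nk) on −v_{i,j}·j for each j ∈ [k]. There exist absolute constants c, c' > 0 such that: for any index pair (i,j), any v̄, v that agree everywhere except at (i,j) with v̄_{i,j} = +1 and v_{i,j} = −1, and any (possibly randomized) function A mapping N-tuples of points of T^n to {±1}^{n×k}, if N ≤ c·nk/ε² then Pr_{s∼(D^{v̄})^N}[A(s)_{i,j} ≠ +1] + Pr_{s∼(D^{v})^N}[A(s)_{i,j} ≠ −1] ≥ c'. 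-/
lemma marg_nonneg {n k : ℕ} {ε : ℝ} (hn : 1 ≤ n) (hε0 : 0 ≤ ε) (hε1 : ε ≤ 1)
    (v : Fin n → Fin k → Bool) (i : Fin n) (x : ℤ) : 0 ≤ marg n k ε v i x := by
  have hn' : (1:ℝ) ≤ (n:ℝ) := by exact_mod_cast hn
  unfold marg
  split_ifs with h1 h2 h3
  · have : 1 / (n:ℝ) ≤ 1 := by
      rw [div_le_one (by linarith)]; linarith
    linarith
  · apply div_nonneg (by linarith); positivity
  · apply div_nonneg (by linarith); positivity
  · exact le_refl 0

lemma marg_pos_eval {n k : ℕ} (ε : ℝ) (v : Fin n → Fin k → Bool) (i : Fin n)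
    {x : ℤ} (h1 : 1 ≤ x) (h2 : x ≤ (k:ℤ)) (hlt : x.natAbs - 1 < k) :
    marg n k ε v i x = if v i ⟨x.natAbs - 1, hlt⟩
      then (1 + ε) / (2 * (n:ℝ) * k) else (1 - ε) / (2 * (n:ℝ) * k) := by
  have hx0 : x ≠ 0 := by omega
  have hb : 1 ≤ x.natAbs ∧ x.natAbs ≤ k := by omega
  unfold marg
  rw [if_neg hx0, dif_pos hb]
  by_cases hv : v i ⟨x.natAbs - 1, hlt⟩ = true
  · rw [if_pos, if_pos hv]
    simp [hv]; omega
  · rw [if_neg, if_neg (by simpa using hv)]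
    simp [hv]; omega

lemma marg_neg_eval {n k : ℕ} (ε : ℝ) (v : Fin n → Fin k → Bool) (i : Fin n)
    {x : ℤ} (h1 : 1 ≤ x) (h2 : x ≤ (k:ℤ)) (hlt : x.natAbs - 1 < k) :
    marg n k ε v i (-x) = if v i ⟨x.natAbs - 1, hlt⟩
      then (1 - ε) / (2 * (n:ℝ) * k) else (1 + ε) / (2 * (n:ℝ) * k) := by
  have hx0 : -x ≠ 0 := by omega
  have hb : 1 ≤ (-x).natAbs ∧ (-x).natAbs ≤ k := by omega
  have hna : (-x).natAbs = x.natAbs := by simp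
  unfold marg
  rw [if_neg hx0, dif_pos hb]
  have hfin : (⟨(-x).natAbs - 1, by omega⟩ : Fin k) = ⟨x.natAbs - 1, hlt⟩ := by
    simp [hna]
  rw [hfin]
  by_cases hv : v i ⟨x.natAbs - 1, hlt⟩ = true
  · rw [if_neg, if_pos hv]
    simp [hv]; omega
  · rw [if_pos, if_neg (by simpa using hv)]
    simp [hv]; omega

lemma marg_pair {n k : ℕ} (ε : ℝ) (v : Fin n → Fin k → Bool) (i : Fin n)
    {x : ℤ} (h1 : 1 ≤ x) (h2 : x ≤ (k:ℤ)) :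
    marg n k ε v i x + marg n k ε v i (-x) = 2 / (2 * (n:ℝ) * k) := by
  have hlt : x.natAbs - 1 < k := by omega
  rw [marg_pos_eval ε v i h1 h2 hlt, marg_neg_eval ε v i h1 h2 hlt]
  by_cases hv : v i ⟨x.natAbs - 1, hlt⟩ <;> simp [hv] <;> ring

lemma Tbox_split (k : ℕ) :
    Tbox k = (Finset.Icc (1:ℤ) k ∪ (Finset.Icc (1:ℤ) k).image Neg.neg) ∪ {0} := by
  ext x
  simp only [Tbox, Finset.mem_Icc, Finset.mem_union, Finset.mem_image,
    Finset.mem_singleton]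
  constructor
  · rintro ⟨ha, hb⟩
    rcases lt_trichotomy x 0 with h | h | h
    · exact Or.inl (Or.inr ⟨-x, by omega, by omega⟩)
    · exact Or.inr h
    · exact Or.inl (Or.inl (by omega))
  · rintro ((⟨ha, hb⟩) | ⟨a, ⟨ha, hb⟩, rfl⟩ | rfl) <;> omega

lemma pair_disj (k : ℕ) :
    Disjoint (Finset.Icc (1:ℤ) k) ((Finset.Icc (1:ℤ) k).image Neg.neg) := by
  simp only [Finset.disjoint_left, Finset.mem_Icc, Finset.mem_image, not_exists]
  rintro a ⟨ha, _⟩ b ⟨⟨hb, _⟩, he⟩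
  omega

lemma zero_disj (k : ℕ) :
    Disjoint ((Finset.Icc (1:ℤ) k) ∪ (Finset.Icc (1:ℤ) k).image Neg.neg)
      ({0} : Finset ℤ) := by
  simp only [Finset.disjoint_right, Finset.mem_union, Finset.mem_Icc,
    Finset.mem_image, Finset.mem_singleton]
  rintro a rfl
  push_neg
  refine ⟨by omega, ?_⟩
  rintro b ⟨hb, _⟩
  omega

lemma Tbox_sum (k : ℕ) (f : ℤ → ℝ) :
    ∑ x ∈ Tbox k, f x = (∑ x ∈ Finset.Icc (1:ℤ) k, (f x + f (-x))) + f 0 := by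
  rw [Tbox_split, Finset.sum_union (zero_disj k), Finset.sum_union (pair_disj k),
    Finset.sum_image (fun a _ b _ h => neg_injective h), Finset.sum_singleton,
    Finset.sum_add_distrib]

lemma marg_sum_one {n k : ℕ} (hn : 1 ≤ n) (hk : 1 ≤ k) (ε : ℝ)
    (v : Fin n → Fin k → Bool) (i : Fin n) :
    ∑ x ∈ Tbox k, marg n k ε v i x = 1 := by
  have hn0 : (n:ℝ) ≠ 0 := by positivity
  have hk0 : (k:ℝ) ≠ 0 := by positivity
  rw [Tbox_sum]
  have h0 : marg n k ε v i 0 = 1 - 1/(n:ℝ) := by unfold marg; simp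
  have : ∀ x ∈ Finset.Icc (1:ℤ) k, marg n k ε v i x + marg n k ε v i (-x)
      = 2 / (2 * (n:ℝ) * k) := fun x hx => by
    simp only [Finset.mem_Icc] at hx
    exact marg_pair ε v i hx.1 hx.2
  rw [Finset.sum_congr rfl this, Finset.sum_const, Int.card_Icc, h0]
  have hcard : ((k:ℤ) + 1 - 1).toNat = k := by omega
  rw [hcard]
  field_simp
  have h1 : (n:ℝ) * k • (1 / ((n:ℝ) * k)) = 1 := by rw [nsmul_eq_mul]; field_simp
  linarith

lemma marg_agree {n k : ℕ} (ε : ℝ) (vbar vlow : Fin n → Fin k → Bool) (i : Fin n)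
    (j : Fin k) (hagree : ∀ j' : Fin k, j' ≠ j → vbar i j' = vlow i j')
    {x : ℤ} (hp : x ≠ (j:ℤ) + 1) (hm : x ≠ -((j:ℤ) + 1)) :
    marg n k ε vbar i x = marg n k ε vlow i x := by
  unfold marg
  by_cases hx0 : x = 0
  · simp [hx0]
  rw [if_neg hx0, if_neg hx0]
  by_cases hr : 1 ≤ x.natAbs ∧ x.natAbs ≤ k
  · rw [dif_pos hr, dif_pos hr]
    have hv : ∀ p : x.natAbs - 1 < k,
        vbar i ⟨x.natAbs - 1, p⟩ = vlow i ⟨x.natAbs - 1, p⟩ := by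
      intro p
      apply hagree
      intro he
      have : x.natAbs - 1 = (j:ℕ) := by
        have := congrArg Fin.val he; simpa using this
      omega
    rw [hv]
  · rw [dif_neg hr, dif_neg hr]

lemma cross_sum {n k : ℕ} (hn : 1 ≤ n) (hk : 1 ≤ k) {ε : ℝ} (hε0 : 0 < ε)
    (hε1 : ε < 1) (i : Fin n) (j : Fin k) (vbar vlow : Fin n → Fin k → Bool)
    (hb : vbar i j = true) (hl : vlow i j = false)
    (hagree : ∀ j' : Fin k, j' ≠ j → vbar i j' = vlow i j') :
    1 - ε^2/((n:ℝ)*k) ≤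
      ∑ x ∈ Tbox k, Real.sqrt (marg n k ε vbar i x * marg n k ε vlow i x) := by
  have hn' : (1:ℝ) ≤ (n:ℝ) := by exact_mod_cast hn
  have hk' : (1:ℝ) ≤ (k:ℝ) := by exact_mod_cast hk
  have hD : (0:ℝ) < 2*(n:ℝ)*k := by positivity
  set f : ℤ → ℝ := fun x => Real.sqrt (marg n k ε vbar i x * marg n k ε vlow i x)
    with hf
  rw [Tbox_sum k f]
  have hf0 : f 0 = 1 - 1/(n:ℝ) := by
    have h0 : marg n k ε vbar i 0 = 1 - 1/(n:ℝ) := by unfold marg; simp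
    have h0' : marg n k ε vlow i 0 = 1 - 1/(n:ℝ) := by unfold marg; simp
    have : (0:ℝ) ≤ 1 - 1/(n:ℝ) := by
      have : 1 / (n:ℝ) ≤ 1 := by rw [div_le_one (by linarith)]; linarith
      linarith
    show Real.sqrt (marg n k ε vbar i 0 * marg n k ε vlow i 0) = 1 - 1/(n:ℝ)
    rw [h0, h0', Real.sqrt_mul_self this]
  have key : ∀ x ∈ Finset.Icc (1:ℤ) k,
      2/(2*(n:ℝ)*k) - (if x = (j:ℤ)+1 then ε^2/((n:ℝ)*k) else 0) ≤ f x + f (-x) := by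
    intro x hx
    simp only [Finset.mem_Icc] at hx
    obtain ⟨h1, h2⟩ := hx
    by_cases hxj : x = (j:ℤ) + 1
    · rw [if_pos hxj]
      have hlt : x.natAbs - 1 < k := by omega
      have hfin : (⟨x.natAbs - 1, hlt⟩ : Fin k) = j := by
        apply Fin.ext; simp [hxj]; omega
      have e1 : marg n k ε vbar i x = (1+ε)/(2*(n:ℝ)*k) := by
        rw [marg_pos_eval ε vbar i h1 h2 hlt, hfin, hb]; simp
      have e2 : marg n k ε vlow i x = (1-ε)/(2*(n:ℝ)*k) := by
        rw [marg_pos_eval ε vlow i h1 h2 hlt, hfin, hl]; simp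
      have e3 : marg n k ε vbar i (-x) = (1-ε)/(2*(n:ℝ)*k) := by
        rw [marg_neg_eval ε vbar i h1 h2 hlt, hfin, hb]; simp
      have e4 : marg n k ε vlow i (-x) = (1+ε)/(2*(n:ℝ)*k) := by
        rw [marg_neg_eval ε vlow i h1 h2 hlt, hfin, hl]; simp
      have hε2 : (0:ℝ) ≤ 1 - ε^2 := by nlinarith
      have hsq : ((1-ε^2)/(2*(n:ℝ)*k))^2 ≤ (1+ε)/(2*(n:ℝ)*k) * ((1-ε)/(2*(n:ℝ)*k)) := by
        have he : (1+ε)/(2*(n:ℝ)*k) * ((1-ε)/(2*(n:ℝ)*k)) = (1-ε^2)/(2*(n:ℝ)*k)^2 := by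
          field_simp; ring
        rw [he, div_pow]
        gcongr
        nlinarith
      have hs1 : (1-ε^2)/(2*(n:ℝ)*k) ≤ f x := by
        show _ ≤ Real.sqrt (marg n k ε vbar i x * marg n k ε vlow i x)
        rw [e1, e2]
        exact Real.le_sqrt_of_sq_le hsq
      have hs2 : (1-ε^2)/(2*(n:ℝ)*k) ≤ f (-x) := by
        show _ ≤ Real.sqrt (marg n k ε vbar i (-x) * marg n k ε vlow i (-x))
        rw [e3, e4, mul_comm ((1-ε)/(2*(n:ℝ)*k)) ((1+ε)/(2*(n:ℝ)*k))]
        exact Real.le_sqrt_of_sq_le hsq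
      have : 2/(2*(n:ℝ)*k) - ε^2/((n:ℝ)*k) = 2*((1-ε^2)/(2*(n:ℝ)*k)) := by
        field_simp
      linarith
    · rw [if_neg hxj]
      have hxm : x ≠ -((j:ℤ)+1) := by omega
      have hmp : -x ≠ (j:ℤ)+1 := by omega
      have hmm : -x ≠ -((j:ℤ)+1) := by omega
      have e1 := marg_agree ε vbar vlow i j hagree hxj hxm
      have e2 := marg_agree ε vbar vlow i j hagree hmp hmm
      have hnn := marg_nonneg hn (le_of_lt hε0) (le_of_lt hε1) vbar i
      have : f x + f (-x) = marg n k ε vbar i x + marg n k ε vbar i (-x) := by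
        rw [hf]; dsimp only
        rw [← e1, ← e2, Real.sqrt_mul_self (hnn x), Real.sqrt_mul_self (hnn (-x))]
      rw [this, marg_pair ε vbar i h1 h2]
      simp
  have hsum := Finset.sum_le_sum key
  rw [Finset.sum_sub_distrib, Finset.sum_const, Finset.sum_ite_eq'] at hsum
  have hmem : ((j:ℤ)+1) ∈ Finset.Icc (1:ℤ) k := by
    simp only [Finset.mem_Icc]
    constructor
    · omega
    · have := j.isLt; omega
  rw [if_pos hmem, Int.card_Icc] at hsum
  have hcard : ((k:ℤ) + 1 - 1).toNat = k := by omega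
  rw [hcard, nsmul_eq_mul] at hsum
  rw [hf0]
  have hrw : (k:ℝ) * (2/(2*(n:ℝ)*k)) = 1/(n:ℝ) := by field_simp
  rw [hrw] at hsum
  linarith

lemma sqrt_prod {ι : Type*} (s : Finset ι) (f : ι → ℝ) (h : ∀ i ∈ s, 0 ≤ f i) :
    Real.sqrt (∏ i ∈ s, f i) = ∏ i ∈ s, Real.sqrt (f i) := by
  induction s using Finset.cons_induction with
  | empty => simp
  | cons a s ha ih =>
    rw [Finset.prod_cons, Finset.prod_cons,
      Real.sqrt_mul (h a (Finset.mem_cons_self a s)), ih]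
    intro i hi
    exact h i (Finset.mem_cons_of_mem hi)

lemma sample_factor (n k N : ℕ) (F : Fin n → ℤ → ℝ) :
    ∑ s ∈ sampleBox n k N, ∏ m : Fin N, ∏ i : Fin n, F i (s m i)
      = (∏ i : Fin n, ∑ x ∈ Tbox k, F i x)^N := by
  rw [sampleBox, ← Finset.prod_univ_sum
    (fun _ : Fin N => Fintype.piFinset fun _ : Fin n => Tbox k)
    (fun _ t => ∏ i : Fin n, F i (t i))]
  have inner : ∑ t ∈ Fintype.piFinset (fun _ : Fin n => Tbox k), ∏ i, F i (t i)
      = ∏ i : Fin n, ∑ x ∈ Tbox k, F i x :=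
    (Finset.prod_univ_sum (fun _ : Fin n => Tbox k) (fun i x => F i x)).symm
  rw [Finset.prod_congr rfl (fun m _ => inner), Finset.prod_const,
    Finset.card_univ, Fintype.card_fin]

lemma sampleP_nonneg {n k N : ℕ} {ε : ℝ} (hn : 1 ≤ n) (hε0 : 0 ≤ ε) (hε1 : ε ≤ 1)
    (v : Fin n → Fin k → Bool) (s : Fin N → Fin n → ℤ) :
    0 ≤ sampleP n k N ε v s := by
  apply Finset.prod_nonneg
  intro m _
  exact Finset.prod_nonneg fun i _ => marg_nonneg hn hε0 hε1 v i (s m i)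

lemma sampleP_sum_one {n k N : ℕ} (hn : 1 ≤ n) (hk : 1 ≤ k) {ε : ℝ}
    (v : Fin n → Fin k → Bool) :
    ∑ s ∈ sampleBox n k N, sampleP n k N ε v s = 1 := by
  unfold sampleP
  rw [sample_factor n k N (fun i x => marg n k ε v i x)]
  rw [Finset.prod_congr rfl (fun i _ => marg_sum_one hn hk ε v i)]
  simp

lemma rho_bound {n k : ℕ} (hn : 1 ≤ n) (hk : 1 ≤ k) {ε : ℝ} (hε0 : 0 < ε)
    (hε1 : ε < 1) (i : Fin n) (j : Fin k) (vbar vlow : Fin n → Fin k → Bool)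
    (hb : vbar i j = true) (hl : vlow i j = false)
    (hagree : ∀ (i' : Fin n) (j' : Fin k), (i', j') ≠ (i, j) → vbar i' j' = vlow i' j')
    (N : ℕ) :
    (1 - ε^2/((n:ℝ)*k))^N ≤ ∑ s ∈ sampleBox n k N,
      Real.sqrt (sampleP n k N ε vbar s * sampleP n k N ε vlow s) := by
  have hnn1 := marg_nonneg (k := k) hn (le_of_lt hε0) (le_of_lt hε1) vbar
  have hnn2 := marg_nonneg (k := k) hn (le_of_lt hε0) (le_of_lt hε1) vlow
  set g : Fin n → ℤ → ℝ :=
    fun i' x => Real.sqrt (marg n k ε vbar i' x * marg n k ε vlow i' x) with hg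
  have hPQ : ∀ s : Fin N → Fin n → ℤ,
      Real.sqrt (sampleP n k N ε vbar s * sampleP n k N ε vlow s)
        = ∏ m : Fin N, ∏ i' : Fin n, g i' (s m i') := by
    intro s
    unfold sampleP
    rw [← Finset.prod_mul_distrib]
    rw [sqrt_prod _ _ (fun m _ => mul_nonneg
      (Finset.prod_nonneg fun i' _ => hnn1 i' (s m i'))
      (Finset.prod_nonneg fun i' _ => hnn2 i' (s m i')))]
    apply Finset.prod_congr rfl
    intro m _
    rw [← Finset.prod_mul_distrib]
    exact sqrt_prod _ _ (fun i' _ => mul_nonneg (hnn1 i' (s m i')) (hnn2 i' (s m i')))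
  rw [Finset.sum_congr rfl (fun s _ => hPQ s), sample_factor n k N g]
  have hprod : ∏ i' : Fin n, ∑ x ∈ Tbox k, g i' x = ∑ x ∈ Tbox k, g i x := by
    apply Finset.prod_eq_single_of_mem i (Finset.mem_univ i)
    intro i' _ hne
    have heq : ∀ x : ℤ, g i' x = marg n k ε vbar i' x := by
      intro x
      have : marg n k ε vbar i' x = marg n k ε vlow i' x := by
        have hag : ∀ j' : Fin k, vbar i' j' = vlow i' j' := fun j' =>
          hagree i' j' (by simp [hne])
        unfold marg
        by_cases hx0 : x = 0
        · simp [hx0]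
        rw [if_neg hx0, if_neg hx0]
        by_cases hr : 1 ≤ x.natAbs ∧ x.natAbs ≤ k
        · rw [dif_pos hr, dif_pos hr, hag]
        · rw [dif_neg hr, dif_neg hr]
      rw [hg]
      dsimp only
      rw [← this, Real.sqrt_mul_self (hnn1 i' x)]
    rw [Finset.sum_congr rfl (fun x _ => heq x), marg_sum_one hn hk ε vbar i']
  rw [hprod]
  have hcross : 1 - ε^2/((n:ℝ)*k) ≤ ∑ x ∈ Tbox k, g i x :=
    cross_sum hn hk hε0 hε1 i j vbar vlow hb hl
      (fun j' hj' => hagree i j' (by simp [hj']))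
  have hnk : (1:ℝ) ≤ (n:ℝ)*(k:ℝ) := by
    have h1 : (1:ℝ) ≤ (n:ℝ) := by exact_mod_cast hn
    have h2 : (1:ℝ) ≤ (k:ℝ) := by exact_mod_cast hk
    nlinarith
  have h0 : (0:ℝ) ≤ 1 - ε^2/((n:ℝ)*k) := by
    have : ε^2/((n:ℝ)*k) ≤ 1 := by
      rw [div_le_one (by linarith)]
      nlinarith
    linarith
  exact pow_le_pow_left₀ h0 hcross N

/-!
STATEMENT 3: indistinguishability of two neighboring hard distributions:
if `v̄, v` differ only at `(i,j)` (with `v̄_{i,j} = +1`, `v_{i,j} = −1`) and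
`N ≤ c·nk/ε²`, then the two error probabilities of any (possibly randomized)
guesser `A` sum to at least `c'`. -/
open Classical in
theorem stmt3 :
    ∃ c c' : ℝ, 0 < c ∧ 0 < c' ∧
      ∀ n k : ℕ, 1 ≤ n → 1 ≤ k →
      ∀ ε : ℝ, ε ∈ Set.Ioo (0 : ℝ) 1 →
      ∀ (i : Fin n) (j : Fin k) (vbar vlow : Fin n → Fin k → Bool),
        vbar i j = true → vlow i j = false →
        (∀ (i' : Fin n) (j' : Fin k), (i', j') ≠ (i, j) → vbar i' j' = vlow i' j') →
      ∀ N : ℕ, (N : ℝ) ≤ c * (n * k : ℝ) / ε ^ 2 →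
      ∀ A : (Fin N → Fin n → ℤ) → (Fin n → Fin k → Bool) → ℝ,
        (∀ s, (∀ w, 0 ≤ A s w) ∧ ∑ w : Fin n → Fin k → Bool, A s w = 1) →
        c' ≤
          (∑ s ∈ sampleBox n k N, sampleP n k N ε vbar s *
              ∑ w ∈ Finset.univ.filter (fun w : Fin n → Fin k → Bool => w i j ≠ true),
                A s w)
          + ∑ s ∈ sampleBox n k N, sampleP n k N ε vlow s *
              ∑ w ∈ Finset.univ.filter (fun w : Fin n → Fin k → Bool => w i j ≠ false),
                A s w := by
  refine ⟨1/2, 1/8, by norm_num, by norm_num, ?_⟩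
  intro n k hn hk ε hε i j vbar vlow hb hl hagree N hN A hA
  obtain ⟨hε0, hε1⟩ := hε
  have hn' : (1:ℝ) ≤ (n:ℝ) := by exact_mod_cast hn
  have hk' : (1:ℝ) ≤ (k:ℝ) := by exact_mod_cast hk
  have hnk1 : (1:ℝ) ≤ (n:ℝ)*(k:ℝ) := by nlinarith
  have hnk0 : (0:ℝ) < (n:ℝ)*(k:ℝ) := by linarith
  set P : (Fin N → Fin n → ℤ) → ℝ := fun s => sampleP n k N ε vbar s with hP
  set Q : (Fin N → Fin n → ℤ) → ℝ := fun s => sampleP n k N ε vlow s with hQ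
  set B := sampleBox n k N with hB
  have hPn : ∀ s, 0 ≤ P s := fun s =>
    sampleP_nonneg hn (le_of_lt hε0) (le_of_lt hε1) vbar s
  have hQn : ∀ s, 0 ≤ Q s := fun s =>
    sampleP_nonneg hn (le_of_lt hε0) (le_of_lt hε1) vlow s
  set a : (Fin N → Fin n → ℤ) → ℝ := fun s =>
    ∑ w ∈ Finset.univ.filter (fun w : Fin n → Fin k → Bool => w i j ≠ true), A s w
    with ha
  set b : (Fin N → Fin n → ℤ) → ℝ := fun s =>
    ∑ w ∈ Finset.univ.filter (fun w : Fin n → Fin k → Bool => w i j ≠ false), A s w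
    with hbdef
  have hab : ∀ s, a s + b s = 1 := by
    intro s
    have hfb : Finset.univ.filter (fun w : Fin n → Fin k → Bool => w i j ≠ false)
        = Finset.univ.filter (fun w : Fin n → Fin k → Bool => w i j = true) := by
      apply Finset.filter_congr
      intro w _
      simp
    have hfa : Finset.univ.filter (fun w : Fin n → Fin k → Bool => w i j ≠ true)
        = Finset.univ.filter (fun w : Fin n → Fin k → Bool => ¬ (w i j = true)) := by
      rfl
    rw [ha, hbdef]
    dsimp only
    rw [hfb, hfa, add_comm, Finset.sum_filter_add_sum_filter_not]
    exact (hA s).2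
  have ha0 : ∀ s, 0 ≤ a s := fun s =>
    Finset.sum_nonneg fun w _ => (hA s).1 w
  have hb0 : ∀ s, 0 ≤ b s := fun s =>
    Finset.sum_nonneg fun w _ => (hA s).1 w
  -- Step 1: LHS ≥ sum of min
  have key1 : ∑ s ∈ B, min (P s) (Q s) ≤
      (∑ s ∈ B, P s * a s) + ∑ s ∈ B, Q s * b s := by
    rw [← Finset.sum_add_distrib]
    apply Finset.sum_le_sum
    intro s _
    have h1 : min (P s) (Q s) * a s ≤ P s * a s :=
      mul_le_mul_of_nonneg_right (min_le_left _ _) (ha0 s)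
    have h2 : min (P s) (Q s) * b s ≤ Q s * b s :=
      mul_le_mul_of_nonneg_right (min_le_right _ _) (hb0 s)
    have : min (P s) (Q s) = min (P s) (Q s) * a s + min (P s) (Q s) * b s := by
      rw [← mul_add, hab s, mul_one]
    linarith
  -- Step 2: rho lower bound
  set ρ := ∑ s ∈ B, Real.sqrt (P s * Q s) with hρdef
  have hεsq : ε^2/((n:ℝ)*k) ≤ 1 := by
    rw [div_le_one hnk0]
    nlinarith
  have hρ : 1/2 ≤ ρ := by
    have h1 := rho_bound hn hk hε0 hε1 i j vbar vlow hb hl hagree N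
    have h2 : 1 + (N:ℝ) * (-(ε^2/((n:ℝ)*k))) ≤ (1 + (-(ε^2/((n:ℝ)*k))))^N :=
      one_add_mul_le_pow (by linarith) N
    have h3 : (N:ℝ) * ε^2 ≤ (1/2)*((n:ℝ)*k) := by
      have hε2 : (0:ℝ) < ε^2 := by positivity
      have := mul_le_mul_of_nonneg_right hN (le_of_lt hε2)
      rwa [div_mul_cancel₀ _ (ne_of_gt hε2)] at this
    have h4 : (N:ℝ) * (ε^2/((n:ℝ)*k)) ≤ 1/2 := by
      rw [mul_div_assoc'] at *
      rw [div_le_iff₀ hnk0]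
      linarith
    have h5 : (1:ℝ) - (N:ℝ)*(ε^2/((n:ℝ)*k)) ≤ (1 - ε^2/((n:ℝ)*k))^N := by
      have e1 : (1:ℝ) + (N:ℝ) * (-(ε^2/((n:ℝ)*k))) = 1 - (N:ℝ)*(ε^2/((n:ℝ)*k)) := by
        ring
      have e2 : (1:ℝ) + (-(ε^2/((n:ℝ)*k))) = 1 - ε^2/((n:ℝ)*k) := by ring
      rw [e1, e2] at h2
      exact h2
    calc (1:ℝ)/2 ≤ 1 - (N:ℝ)*(ε^2/((n:ℝ)*k)) := by linarith
    _ ≤ (1 - ε^2/((n:ℝ)*k))^N := h5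
    _ ≤ ρ := h1
  -- Step 3: Cauchy-Schwarz
  have hsqrt : ∀ s ∈ B, Real.sqrt (P s * Q s)
      = Real.sqrt (min (P s) (Q s)) * Real.sqrt (max (P s) (Q s)) := by
    intro s _
    rw [← Real.sqrt_mul (le_min (hPn s) (hQn s)), min_mul_max]
  have hCS : ρ^2 ≤ (∑ s ∈ B, min (P s) (Q s)) * ∑ s ∈ B, max (P s) (Q s) := by
    rw [hρdef, Finset.sum_congr rfl hsqrt]
    have := Finset.sum_mul_sq_le_sq_mul_sq B
      (fun s => Real.sqrt (min (P s) (Q s))) (fun s => Real.sqrt (max (P s) (Q s)))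
    have e1 : ∀ s ∈ B, Real.sqrt (min (P s) (Q s))^2 = min (P s) (Q s) := fun s _ =>
      Real.sq_sqrt (le_min (hPn s) (hQn s))
    have e2 : ∀ s ∈ B, Real.sqrt (max (P s) (Q s))^2 = max (P s) (Q s) := fun s _ =>
      Real.sq_sqrt (le_max_of_le_left (hPn s))
    rw [Finset.sum_congr rfl e1, Finset.sum_congr rfl e2] at this
    exact this
  have hsumP : ∑ s ∈ B, P s = 1 := sampleP_sum_one hn hk vbar
  have hsumQ : ∑ s ∈ B, Q s = 1 := sampleP_sum_one hn hk vlow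
  have hmax2 : ∑ s ∈ B, max (P s) (Q s) ≤ 2 := by
    have : ∀ s ∈ B, max (P s) (Q s) ≤ P s + Q s := fun s _ =>
      max_le (le_add_of_nonneg_right (hQn s)) (le_add_of_nonneg_left (hPn s))
    calc ∑ s ∈ B, max (P s) (Q s) ≤ ∑ s ∈ B, (P s + Q s) := Finset.sum_le_sum this
    _ = 2 := by rw [Finset.sum_add_distrib, hsumP, hsumQ]; norm_num
  have hmin0 : 0 ≤ ∑ s ∈ B, min (P s) (Q s) :=
    Finset.sum_nonneg fun s _ => le_min (hPn s) (hQn s)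
  have hfinal : 1/8 ≤ ∑ s ∈ B, min (P s) (Q s) := by
    have h14 : (1:ℝ)/4 ≤ ρ^2 := by nlinarith
    have := mul_le_mul_of_nonneg_left hmax2 hmin0
    nlinarith
  linarith
end

section
/- The prophet inequality problem is strongly monotone: for any two product distributions D = D_1×…×D_n and D̃ = D̃_1×…×D̃_n on [0,1]^n with D ⪰ D̃ (coordinatewise first-order stochastic dominance), the backward-induction optimal thresholds θ̃ for D̃ satisfy E_{t∼D}[h_{θ̃}(t)] ≥ E_{t∼D̃}[h_{θ̃}(t)], and the right-hand side equals the optimal expected reward achievable by any stopping strategy on D̃. -/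
open MeasureTheory ProbabilityTheory
open scoped NNReal ENNReal

/-- Expected value `h(D) = E_{t∼D}[h(t)]` of a hypothesis under the product
distribution with marginals `μ i`. -/
noncomputable def expVal {n : ℕ} (h : (Fin n → ℝ) → ℝ) (μ : Fin n → Measure ℝ) : ℝ :=
  ∫ t, h t ∂(Measure.pi μ)

/-- A distribution on `ℝ` supported on `[0,1]`. -/
def SuppIn01 (μ : Measure ℝ) : Prop := μ (Set.Icc (0 : ℝ) 1)ᶜ = 0

/-- `Opt(D) = sup_{h ∈ H} h(D)`. -/
noncomputable def Opt {n : ℕ} (H : Set ((Fin n → ℝ) → ℝ)) (μ : Fin n → Measure ℝ) : ℝ :=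
  ⨆ h : H, expVal (h : (Fin n → ℝ) → ℝ) μ

/-- Coordinatewise first-order stochastic dominance `P ⪰ Q`:
`F_{P_i}(t) ≤ F_{Q_i}(t)` for every `i` and `t`. -/
def StochDom {n : ℕ} (P Q : Fin n → Measure ℝ) : Prop :=
  ∀ (i : Fin n) (t : ℝ), cdf (P i) t ≤ cdf (Q i) t

/-- Strong monotonicity of a problem `H`: for every product distribution `D̃`
(on `[0,1]ⁿ`) there is an optimal hypothesis `h_{D̃}` whose expected value on any
product distribution `D ⪰ D̃` is at least `Opt(D̃)`. -/
def StronglyMonotone {n : ℕ} (H : Set ((Fin n → ℝ) → ℝ)) : Prop :=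
  ∀ Dt : Fin n → Measure ℝ, (∀ i, IsProbabilityMeasure (Dt i)) → (∀ i, SuppIn01 (Dt i)) →
    ∃ h ∈ H, expVal h Dt = Opt H Dt ∧
      ∀ D : Fin n → Measure ℝ, (∀ i, IsProbabilityMeasure (D i)) → (∀ i, SuppIn01 (D i)) →
        StochDom D Dt → Opt H Dt ≤ expVal h D

/-- The marginal empirical measure: the uniform distribution over the `i`-th
coordinates of the samples `s`. -/
noncomputable def empMeas {N n : ℕ} (s : Fin N → Fin n → ℝ) (i : Fin n) : Measure ℝ :=
  ((N : ℝ≥0)⁻¹ : ℝ≥0) • ∑ m : Fin N, Measure.dirac (s m i)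

/-- Expectation of `h` under the *product empirical distribution* `E = E_1 × ⋯ × E_n`
determined by the samples `s` (written directly as a finite average over all
combinations of sample coordinates). -/
noncomputable def empExp {N n : ℕ} (s : Fin N → Fin n → ℝ) (h : (Fin n → ℝ) → ℝ) : ℝ :=
  (∑ m : Fin n → Fin N, h fun i => s (m i) i) / (N ^ n : ℕ)

/-- `Opt(E)` for the product empirical distribution of the samples `s`. -/
noncomputable def empOpt {N n : ℕ} (H : Set ((Fin n → ℝ) → ℝ)) (s : Fin N → Fin n → ℝ) : ℝ :=
  ⨆ h : H, empExp s (h : (Fin n → ℝ) → ℝ)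

/-- The empirical CDF `F_{E_i}(t) = #{m : s_i^{(m)} ≤ t} / N`. -/
noncomputable def empCdf {N n : ℕ} (s : Fin N → Fin n → ℝ) (i : Fin n) (t : ℝ) : ℝ :=
  ((Finset.univ.filter fun m : Fin N => s m i ≤ t).card : ℝ) / N

/-- Total variation distance between two measures. -/
noncomputable def tvDist {α : Type*} [MeasurableSpace α] (P Q : Measure α) : ℝ :=
  ⨆ A : {A : Set α // MeasurableSet A}, ((P A).toReal - (Q A).toReal)

/-- Squared Hellinger distance `H²(P,Q) = 1 − ∫ √(dP/dλ · dQ/dλ) dλ` (`λ = P + Q`). -/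
noncomputable def sqHellinger {α : Type*} [MeasurableSpace α] (P Q : Measure α) : ℝ :=
  1 - ∫ x, Real.sqrt ((P.rnDeriv (P + Q) x).toReal * (Q.rnDeriv (P + Q) x).toReal) ∂(P + Q)

/-- The measure of i.i.d. samples: `N` independent draws from the product
distribution with marginals `μ`. -/
noncomputable def samples (N : ℕ) {n : ℕ} (μ : Fin n → Measure ℝ) :
    Measure (Fin N → Fin n → ℝ) :=
  Measure.pi fun _ : Fin N => Measure.pi μ

/-- The reward of the threshold strategy `θ` on realization `t`, starting from
position `j`: it accepts the first reward `t i ≥ θ i` among positions `i < n−1`,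
and accepts the last reward if it reaches it. -/
noncomputable def prophetAux {n : ℕ} (θ t : Fin n → ℝ) : ℕ → ℝ
  | j =>
    if h : j < n then
      if j = n - 1 then t ⟨j, h⟩
      else if θ ⟨j, h⟩ ≤ t ⟨j, h⟩ then t ⟨j, h⟩
      else prophetAux θ t (j + 1)
    else 0
  termination_by j => n - j
  decreasing_by omega

/-- The reward `h_θ(t)` of the threshold strategy `θ` on realization `t`. -/
noncomputable def prophetReward {n : ℕ} (θ t : Fin n → ℝ) : ℝ := prophetAux θ t 0

/-- The optimal (backward-induction) value of the prophet game on the suffix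
`μ_j × ⋯ × μ_{n−1}`: `V j = E_{x ∼ μ_j}[max(x, V (j+1))]`, `V n = 0`. -/
noncomputable def suffixValue {n : ℕ} (μ : Fin n → Measure ℝ) : ℕ → ℝ
  | j =>
    if h : j < n then ∫ x, max x (suffixValue μ (j + 1)) ∂(μ ⟨j, h⟩)
    else 0
  termination_by j => n - j
  decreasing_by omega

/-- The backward-induction optimal thresholds for the product distribution `μ`:
`θ_{n−1} = 0` and `θ_i` is the optimal expected reward on the suffix after `i`. -/
noncomputable def optThresholds {n : ℕ} (μ : Fin n → Measure ℝ) : Fin n → ℝ :=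
  fun i => if (i : ℕ) = n - 1 then 0 else suffixValue μ ((i : ℕ) + 1)

/-- A nonanticipating stopping rule: its decision depends only on the rewards
observed up to the stopping time. -/
def Nonanticipating {n : ℕ} (τ : (Fin n → ℝ) → Fin n) : Prop :=
  ∀ t t' : Fin n → ℝ, (∀ j : Fin n, j ≤ τ t → t j = t' j) → τ t' = τ t

/-- The optimal expected reward over all (adaptive, nonanticipating) stopping
strategies for the product distribution `μ`. -/
noncomputable def optStopValue {n : ℕ} (μ : Fin n → Measure ℝ) : ℝ :=
  ⨆ τ : {τ : (Fin n → ℝ) → Fin n // Nonanticipating τ},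
    ∫ t, t ((τ : (Fin n → ℝ) → Fin n) t) ∂(Measure.pi μ)

set_option linter.unusedSectionVars false

section Basic

lemma ae_Icc_of_supp {ν : Measure ℝ} (hν : SuppIn01 ν) : ∀ᵐ x ∂ν, x ∈ Set.Icc (0:ℝ) 1 := by
  have h : (Set.Icc (0:ℝ) 1)ᶜ = {a : ℝ | ¬ a ∈ Set.Icc (0:ℝ) 1} := rfl
  rw [ae_iff, ← h]
  exact hν

lemma integrable_of_ae_bound {α} [MeasurableSpace α] {f : α → ℝ} {ν : Measure α}
    [IsFiniteMeasure ν] (C : ℝ) (hm : AEStronglyMeasurable f ν) (h : ∀ᵐ x ∂ν, |f x| ≤ C) :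
    Integrable f ν :=
  (integrable_const C).mono' hm (by simpa [Real.norm_eq_abs] using h)

lemma integrable_max {ν : Measure ℝ} [IsProbabilityMeasure ν] (hν : SuppIn01 ν) (c : ℝ) :
    Integrable (fun x => max x c) ν := by
  refine integrable_of_ae_bound (max 1 |c|)
    (measurable_id.max measurable_const).aestronglyMeasurable ?_
  filter_upwards [ae_Icc_of_supp hν] with x hx
  have h0 : (0:ℝ) ≤ max 1 |c| := le_trans zero_le_one (le_max_left _ _)
  rw [abs_le]
  exact ⟨by linarith [hx.1, le_max_left x c],
    max_le (hx.2.trans (le_max_left _ _)) ((le_abs_self c).trans (le_max_right _ _))⟩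

lemma pi_ae_Icc {n : ℕ} (μ : Fin n → Measure ℝ) [∀ i, IsProbabilityMeasure (μ i)]
    (hμ : ∀ i, SuppIn01 (μ i)) : ∀ᵐ t ∂Measure.pi μ, ∀ i, t i ∈ Set.Icc (0:ℝ) 1 := by
  rw [ae_all_iff]
  intro i
  rw [ae_iff]
  have hset : {t : Fin n → ℝ | ¬ t i ∈ Set.Icc (0:ℝ) 1}
      = Set.pi Set.univ (Function.update (fun _ => (Set.univ : Set ℝ)) i (Set.Icc (0:ℝ) 1)ᶜ) := by
    ext t
    simp only [Set.mem_setOf_eq, Set.mem_univ_pi, Function.update_apply]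
    constructor
    · intro h j
      split
      · next hj => subst hj; simpa using h
      · trivial
    · intro h
      simpa using h i
  rw [hset, Measure.pi_pi]
  apply Finset.prod_eq_zero (Finset.mem_univ i)
  rw [Function.update_self]
  exact hμ i

lemma suffixValue_eq {n : ℕ} (μ : Fin n → Measure ℝ) (j : ℕ) :
    suffixValue μ j = if h : j < n then ∫ x, max x (suffixValue μ (j + 1)) ∂(μ ⟨j, h⟩) else 0 := by
  rw [suffixValue]

lemma suffixValue_bounds {n : ℕ} (μ : Fin n → Measure ℝ) [∀ i, IsProbabilityMeasure (μ i)]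
    (hμ : ∀ i, SuppIn01 (μ i)) : ∀ j, 0 ≤ suffixValue μ j ∧ suffixValue μ j ≤ 1 := by
  suffices H : ∀ k j, n ≤ j + k → 0 ≤ suffixValue μ j ∧ suffixValue μ j ≤ 1 by
    intro j
    exact H n j (by omega)
  intro k
  induction k with
  | zero =>
    intro j hj
    rw [suffixValue_eq]
    have : ¬ j < n := by omega
    simp [this]
  | succ k ih =>
    intro j hj
    by_cases hjn : j < n
    · have hih := ih (j + 1) (by omega)
      rw [suffixValue_eq, dif_pos hjn]
      have hInt : Integrable (fun x => max x (suffixValue μ (j+1))) (μ ⟨j, hjn⟩) :=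
        integrable_max (hμ _) _
      constructor
      · apply integral_nonneg_of_ae
        filter_upwards [ae_Icc_of_supp (hμ ⟨j, hjn⟩)] with x hx
        exact le_trans hx.1 (le_max_left _ _)
      · calc ∫ x, max x (suffixValue μ (j+1)) ∂(μ ⟨j, hjn⟩)
            ≤ ∫ _, (1:ℝ) ∂(μ ⟨j, hjn⟩) := by
              apply integral_mono_ae hInt (integrable_const 1)
              filter_upwards [ae_Icc_of_supp (hμ ⟨j, hjn⟩)] with x hx
              exact max_le hx.2 hih.2
          _ = 1 := by simp
    · rw [suffixValue_eq]; simp [hjn]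

/-- FOSD comparison for `x ↦ max x θ`. -/
lemma fosd_integral_max {P Q : Measure ℝ} [IsProbabilityMeasure P] [IsProbabilityMeasure Q]
    (hP : SuppIn01 P) (hQ : SuppIn01 Q) (hdom : ∀ t, cdf P t ≤ cdf Q t) {θ : ℝ} (hθ : 0 ≤ θ) :
    ∫ x, max x θ ∂Q ≤ ∫ x, max x θ ∂P := by
  set f : ℝ → ℝ := fun x => max x θ - θ with hf
  have hfnn : ∀ x, 0 ≤ f x := fun x => by simp [hf, le_max_right]
  have hfm : Measurable f := (measurable_id.max measurable_const).sub measurable_const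
  have key : ∀ (ν : Measure ℝ), IsProbabilityMeasure ν → SuppIn01 ν →
      (∫ x, max x θ ∂ν = (∫⁻ t in Set.Ioi (0:ℝ), ν (Set.Ioi (θ + t))).toReal + θ
        ∧ (∫⁻ t in Set.Ioi (0:ℝ), ν (Set.Ioi (θ + t))) ≤ 1) := by
    intro ν hprob hsupp
    have hint : Integrable (fun x => max x θ) ν := integrable_max hsupp θ
    have hintf : Integrable f ν := hint.sub (integrable_const θ)
    have h1 : ∫ x, max x θ ∂ν = ∫ x, f x ∂ν + θ := by
      rw [hf]
      rw [integral_sub hint (integrable_const θ)]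
      simp
    have h2 : ∫ x, f x ∂ν = (∫⁻ x, ENNReal.ofReal (f x) ∂ν).toReal :=
      integral_eq_lintegral_of_nonneg_ae (Filter.Eventually.of_forall hfnn)
        hfm.aestronglyMeasurable
    have h3 : ∫⁻ x, ENNReal.ofReal (f x) ∂ν = ∫⁻ t in Set.Ioi (0:ℝ), ν {a : ℝ | t < f a} :=
      lintegral_eq_lintegral_meas_lt ν (Filter.Eventually.of_forall hfnn) hfm.aemeasurable
    have h4 : ∫⁻ t in Set.Ioi (0:ℝ), ν {a : ℝ | t < f a}
        = ∫⁻ t in Set.Ioi (0:ℝ), ν (Set.Ioi (θ + t)) := by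
      apply lintegral_congr_ae
      filter_upwards [ae_restrict_mem measurableSet_Ioi] with t ht
      congr 1
      ext a
      simp only [Set.mem_setOf_eq, Set.mem_Ioi, hf]
      constructor
      · intro h
        by_contra hc
        push_neg at hc
        have : max a θ ≤ θ + t := max_le (by linarith) (by linarith [Set.mem_Ioi.mp ht])
        linarith
      · intro h
        have hlt : θ + t < max a θ := lt_of_lt_of_le h (le_max_left _ _)
        linarith
    have hbound : (∫⁻ t in Set.Ioi (0:ℝ), ν (Set.Ioi (θ + t))) ≤ 1 := by
      have hmono : (∫⁻ t in Set.Ioi (0:ℝ), ν (Set.Ioi (θ + t)))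
          ≤ ∫⁻ t in Set.Ioi (0:ℝ), (Set.Iic (1:ℝ)).indicator (fun _ => (1:ℝ≥0∞)) t := by
        apply lintegral_mono_ae
        filter_upwards [ae_restrict_mem measurableSet_Ioi] with t _
        by_cases h1t : t ≤ 1
        · rw [Set.indicator_of_mem (by exact h1t)]
          exact prob_le_one
        · rw [Set.indicator_of_notMem (by exact h1t)]
          have : Set.Ioi (θ + t) ⊆ (Set.Icc (0:ℝ) 1)ᶜ := by
            intro x hx
            simp only [Set.mem_Ioi] at hx
            simp only [Set.mem_compl_iff, Set.mem_Icc, not_and, not_le]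
            intro _
            push_neg at h1t
            linarith
          exact le_of_eq (measure_mono_null this hsupp)
      refine le_trans hmono ?_
      rw [lintegral_indicator measurableSet_Iic]
      rw [Measure.restrict_restrict measurableSet_Iic]
      simp only [lintegral_const, MeasurableSet.univ, Measure.restrict_apply, Set.univ_inter,
        one_mul]
      have : Set.Iic (1:ℝ) ∩ Set.Ioi 0 = Set.Ioc (0:ℝ) 1 := by
        ext x; simp [Set.mem_Ioc, and_comm]
      rw [this, Real.volume_Ioc]
      simp
    exact ⟨by rw [h1, h2, h3, h4], hbound⟩
  obtain ⟨hQeq, _⟩ := key Q inferInstance hQ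
  obtain ⟨hPeq, hPb⟩ := key P inferInstance hP
  rw [hQeq, hPeq]
  have hQP : ∀ s : ℝ, Q (Set.Ioi s) ≤ P (Set.Ioi s) := by
    intro s
    have hq : Q (Set.Ioi s) = 1 - Q (Set.Iic s) := by
      rw [← Set.compl_Iic, measure_compl measurableSet_Iic (measure_ne_top Q _), measure_univ]
    have hp : P (Set.Ioi s) = 1 - P (Set.Iic s) := by
      rw [← Set.compl_Iic, measure_compl measurableSet_Iic (measure_ne_top P _), measure_univ]
    rw [hq, hp]
    apply tsub_le_tsub_left
    rw [← ofReal_cdf, ← ofReal_cdf]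
    exact ENNReal.ofReal_le_ofReal (hdom _)
  have hmono : (∫⁻ t in Set.Ioi (0:ℝ), Q (Set.Ioi (θ + t)))
      ≤ ∫⁻ t in Set.Ioi (0:ℝ), P (Set.Ioi (θ + t)) :=
    lintegral_mono fun t => hQP (θ + t)
  have hne : (∫⁻ t in Set.Ioi (0:ℝ), P (Set.Ioi (θ + t))) ≠ ⊤ :=
    ne_of_lt (lt_of_le_of_lt hPb (by norm_num))
  have := ENNReal.toReal_mono hne hmono
  linarith

end Basic

section Update
open Function

variable {n : ℕ}

lemma measurable_updateFun (j : Fin n) :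
    Measurable (fun p : (Fin n → ℝ) × ℝ => Function.update p.1 j p.2) :=
  measurable_update'.comp (measurable_fst.prodMk measurable_snd)

lemma map_update (μ : Fin n → Measure ℝ) [∀ i, IsProbabilityMeasure (μ i)] (j : Fin n) :
    Measure.map (fun p : (Fin n → ℝ) × ℝ => Function.update p.1 j p.2)
      ((Measure.pi μ).prod (μ j)) = Measure.pi μ := by
  refine (Measure.pi_eq (μ := μ) fun s hs => ?_).symm
  rw [Measure.map_apply (measurable_updateFun j) (MeasurableSet.univ_pi hs)]
  have hpre : (fun p : (Fin n → ℝ) × ℝ => Function.update p.1 j p.2) ⁻¹' (Set.pi Set.univ s)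
      = (Set.pi Set.univ (Function.update s j Set.univ)) ×ˢ (s j) := by
    ext ⟨t, x⟩
    simp only [Set.mem_preimage, Set.mem_univ_pi, Set.mem_prod, Function.update_apply]
    constructor
    · intro h
      refine ⟨fun i => ?_, by simpa using h j⟩
      by_cases hij : i = j
      · simp [hij]
      · simpa [hij] using h i
    · rintro ⟨h1, h2⟩ i
      by_cases hij : i = j
      · simpa [hij] using h2
      · simpa [hij] using h1 i
  rw [hpre, Measure.prod_prod, Measure.pi_pi]
  have h1 : (∏ i, μ i (Function.update s j Set.univ i))
      = ∏ i, Function.update (fun i => μ i (s i)) j 1 i := by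
    refine Finset.prod_congr rfl fun i _ => ?_
    by_cases hij : i = j
    · subst hij; simp
    · simp [Function.update_apply, hij]
  rw [h1, Finset.prod_update_of_mem (Finset.mem_univ j), one_mul, mul_comm,
    ← Finset.prod_eq_mul_prod_sdiff_singleton_of_mem (Finset.mem_univ j) (fun i => μ i (s i))]

variable (μ : Fin n → Measure ℝ) [∀ i, IsProbabilityMeasure (μ i)]

lemma integrable_comp_update (j : Fin n) {f : (Fin n → ℝ) → ℝ}
    (hf : Integrable f (Measure.pi μ)) :
    Integrable (fun p : (Fin n → ℝ) × ℝ => f (Function.update p.1 j p.2))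
      ((Measure.pi μ).prod (μ j)) := by
  have hmap := map_update μ j
  have h2 : Integrable f (Measure.map (fun p : (Fin n → ℝ) × ℝ => Function.update p.1 j p.2)
      ((Measure.pi μ).prod (μ j))) := by rwa [hmap]
  have h3 : AEStronglyMeasurable f (Measure.map
      (fun p : (Fin n → ℝ) × ℝ => Function.update p.1 j p.2) ((Measure.pi μ).prod (μ j))) := by
    rw [hmap]; exact hf.aestronglyMeasurable
  simpa [Function.comp_def] using
    (integrable_map_measure h3 (measurable_updateFun j).aemeasurable).mp h2

lemma integral_update (j : Fin n) {f : (Fin n → ℝ) → ℝ} (hf : Integrable f (Measure.pi μ)) :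
    ∫ t, f t ∂(Measure.pi μ)
      = ∫ t, ∫ x, f (Function.update t j x) ∂(μ j) ∂(Measure.pi μ) := by
  conv_lhs => rw [← map_update μ j]
  rw [integral_map (measurable_updateFun j).aemeasurable
    (by rw [map_update]; exact hf.aestronglyMeasurable)]
  exact integral_prod _ (integrable_comp_update μ j hf)

lemma integrable_integral_update (j : Fin n) {f : (Fin n → ℝ) → ℝ}
    (hf : Integrable f (Measure.pi μ)) :
    Integrable (fun t => ∫ x, f (Function.update t j x) ∂(μ j)) (Measure.pi μ) :=
  (integrable_comp_update μ j hf).integral_prod_left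

/-- Splitting an integral of `if θ ≤ x then x else c` against a probability measure on ℝ. -/
lemma integral_ite_const (ν : Measure ℝ) [IsProbabilityMeasure ν] (hν : SuppIn01 ν)
    (θ c : ℝ) :
    ∫ x, (if θ ≤ x then x else c) ∂ν
      = (∫ x, (if θ ≤ x then x else 0) ∂ν) + (ν {x : ℝ | x < θ}).toReal * c := by
  have hmeas : MeasurableSet {x : ℝ | x < θ} := measurableSet_lt measurable_id measurable_const
  have hfun : (fun x => if θ ≤ x then x else c)
      = fun x => (if θ ≤ x then x else 0) + Set.indicator {x : ℝ | x < θ} (fun _ => c) x := by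
    ext x
    by_cases h : θ ≤ x
    · rw [if_pos h, if_pos h, Set.indicator_of_notMem (by simpa using h), add_zero]
    · rw [if_neg h, if_neg h, Set.indicator_of_mem (by simpa using lt_of_not_ge h), zero_add]
  have hint1 : Integrable (fun x => if θ ≤ x then x else 0) ν := by
    refine integrable_of_ae_bound 1 ?_ ?_
    · exact (Measurable.ite (measurableSet_le measurable_const measurable_id)
        measurable_id measurable_const).aestronglyMeasurable
    · filter_upwards [ae_Icc_of_supp hν] with x hx
      by_cases h : θ ≤ x
      · rw [if_pos h, abs_of_nonneg hx.1]; exact hx.2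
      · rw [if_neg h]; simp
  have hint2 : Integrable (Set.indicator {x : ℝ | x < θ} (fun _ => c)) ν :=
    (integrable_const c).indicator hmeas
  rw [hfun, integral_add hint1 hint2, integral_indicator_const c hmeas, smul_eq_mul, measureReal_def]

end Update

section Prophet
open Function

variable {n : ℕ}

lemma prophetAux_eq (θ t : Fin n → ℝ) (j : ℕ) :
    prophetAux θ t j = if h : j < n then
      (if j = n - 1 then t ⟨j, h⟩
       else if θ ⟨j, h⟩ ≤ t ⟨j, h⟩ then t ⟨j, h⟩ else prophetAux θ t (j + 1))
    else 0 := by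
  rw [prophetAux]

lemma prophetAux_measurable (θ : Fin n → ℝ) (j : ℕ) :
    Measurable fun t : Fin n → ℝ => prophetAux θ t j := by
  suffices H : ∀ k j, n ≤ j + k → Measurable fun t : Fin n → ℝ => prophetAux θ t j from
    H n j (by omega)
  intro k
  induction k with
  | zero =>
    intro j hj
    have h : ¬ j < n := by omega
    have : (fun t : Fin n → ℝ => prophetAux θ t j) = fun _ => 0 := by
      funext t; rw [prophetAux_eq, dif_neg h]
    rw [this]; exact measurable_const
  | succ k ih =>
    intro j hj
    by_cases h : j < n
    · by_cases hl : j = n - 1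
      · have : (fun t : Fin n → ℝ => prophetAux θ t j) = fun t => t ⟨j, h⟩ := by
          funext t; rw [prophetAux_eq, dif_pos h, if_pos hl]
        rw [this]; exact measurable_pi_apply _
      · have : (fun t : Fin n → ℝ => prophetAux θ t j)
            = fun t => if θ ⟨j, h⟩ ≤ t ⟨j, h⟩ then t ⟨j, h⟩ else prophetAux θ t (j+1) := by
          funext t; rw [prophetAux_eq, dif_pos h, if_neg hl]
        rw [this]
        exact Measurable.ite (measurableSet_le measurable_const (measurable_pi_apply _))
          (measurable_pi_apply _) (ih (j+1) (by omega))
    · have : (fun t : Fin n → ℝ => prophetAux θ t j) = fun _ => 0 := by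
        funext t; rw [prophetAux_eq, dif_neg h]
      rw [this]; exact measurable_const

lemma prophetAux_mem (θ : Fin n → ℝ) {t : Fin n → ℝ} (ht : ∀ i, t i ∈ Set.Icc (0:ℝ) 1)
    (j : ℕ) : prophetAux θ t j ∈ Set.Icc (0:ℝ) 1 := by
  suffices H : ∀ k j, n ≤ j + k → prophetAux θ t j ∈ Set.Icc (0:ℝ) 1 from H n j (by omega)
  intro k
  induction k with
  | zero =>
    intro j hj
    rw [prophetAux_eq, dif_neg (by omega : ¬ j < n)]
    simp
  | succ k ih =>
    intro j hj
    by_cases h : j < n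
    · rw [prophetAux_eq, dif_pos h]
      by_cases hl : j = n - 1
      · rw [if_pos hl]; exact ht _
      · rw [if_neg hl]
        by_cases hc : θ ⟨j, h⟩ ≤ t ⟨j, h⟩
        · rw [if_pos hc]; exact ht _
        · rw [if_neg hc]; exact ih (j+1) (by omega)
    · rw [prophetAux_eq, dif_neg h]; simp

lemma prophetAux_update (θ t : Fin n → ℝ) (j' : Fin n) (x : ℝ) (j : ℕ) (hjj : (j' : ℕ) < j) :
    prophetAux θ (Function.update t j' x) j = prophetAux θ t j := by
  suffices H : ∀ k j, n ≤ j + k → (j' : ℕ) < j →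
      prophetAux θ (Function.update t j' x) j = prophetAux θ t j from H n j (by omega) hjj
  intro k
  induction k with
  | zero =>
    intro j hj _
    have h : ¬ j < n := by omega
    rw [prophetAux_eq θ (Function.update t j' x) j, prophetAux_eq θ t j, dif_neg h, dif_neg h]
  | succ k ih =>
    intro j hj hjj
    by_cases h : j < n
    · have hne : (⟨j, h⟩ : Fin n) ≠ j' := by
        intro hcontr
        have : ((⟨j, h⟩ : Fin n) : ℕ) = (j' : ℕ) := by rw [hcontr]
        simp at this
        omega
      rw [prophetAux_eq θ (Function.update t j' x) j, prophetAux_eq θ t j, dif_pos h,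
        dif_pos h, Function.update_of_ne hne, ih (j+1) (by omega) (by omega)]
    · rw [prophetAux_eq θ (Function.update t j' x) j, prophetAux_eq θ t j, dif_neg h,
        dif_neg h]

variable (μ : Fin n → Measure ℝ) [∀ i, IsProbabilityMeasure (μ i)]

lemma integrable_prophetAux (hμ : ∀ i, SuppIn01 (μ i)) (θ : Fin n → ℝ) (j : ℕ) :
    Integrable (fun t => prophetAux θ t j) (Measure.pi μ) := by
  refine integrable_of_ae_bound 1 (prophetAux_measurable θ j).aestronglyMeasurable ?_
  filter_upwards [pi_ae_Icc μ hμ] with t ht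
  have := prophetAux_mem θ ht j
  rw [abs_le]
  exact ⟨by linarith [this.1], this.2⟩

lemma integral_prophetAux_step (hμ : ∀ i, SuppIn01 (μ i)) (θ : Fin n → ℝ) {j : ℕ}
    (hj : j < n) (hjl : j ≠ n - 1) :
    ∫ t, prophetAux θ t j ∂(Measure.pi μ)
      = (∫ x, (if θ ⟨j, hj⟩ ≤ x then x else 0) ∂(μ ⟨j, hj⟩))
        + (μ ⟨j, hj⟩ {x : ℝ | x < θ ⟨j, hj⟩}).toReal
          * ∫ t, prophetAux θ t (j+1) ∂(Measure.pi μ) := by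
  rw [integral_update μ ⟨j, hj⟩ (integrable_prophetAux μ hμ θ j)]
  have hpoint : ∀ t : Fin n → ℝ, ∫ x, prophetAux θ (Function.update t ⟨j, hj⟩ x) j ∂(μ ⟨j, hj⟩)
      = (∫ x, (if θ ⟨j, hj⟩ ≤ x then x else 0) ∂(μ ⟨j, hj⟩))
        + (μ ⟨j, hj⟩ {x : ℝ | x < θ ⟨j, hj⟩}).toReal * prophetAux θ t (j+1) := by
    intro t
    have hx : ∀ x : ℝ, prophetAux θ (Function.update t ⟨j, hj⟩ x) j
        = if θ ⟨j, hj⟩ ≤ x then x else prophetAux θ t (j+1) := by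
      intro x
      rw [prophetAux_eq, dif_pos hj, if_neg hjl, Function.update_self,
        prophetAux_update θ t ⟨j, hj⟩ x (j+1) (by simp)]
    simp only [hx]
    exact integral_ite_const _ (hμ _) _ _
  simp only [hpoint]
  rw [integral_add (integrable_const _)
    ((integrable_prophetAux μ hμ θ (j+1)).const_mul _), integral_const, integral_const_mul,
    probReal_univ, one_smul]

lemma integral_prophetAux_optimal (hμ : ∀ i, SuppIn01 (μ i)) :
    ∀ j, j < n →
      ∫ t, prophetAux (optThresholds μ) t j ∂(Measure.pi μ) = suffixValue μ j := by
  suffices H : ∀ k j, n ≤ j + k → j < n →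
      ∫ t, prophetAux (optThresholds μ) t j ∂(Measure.pi μ) = suffixValue μ j by
    intro j hj; exact H n j (by omega) hj
  intro k
  induction k with
  | zero => intro j hj hjn; omega
  | succ k ih =>
    intro j hj hjn
    by_cases hl : j = n - 1
    · -- last position: reward is t_j
      have hpoint : ∀ (t : Fin n → ℝ) (x : ℝ),
          prophetAux (optThresholds μ) (Function.update t ⟨j, hjn⟩ x) j = x := by
        intro t x
        rw [prophetAux_eq, dif_pos hjn, if_pos hl, Function.update_self]
      rw [integral_update μ ⟨j, hjn⟩ (integrable_prophetAux μ hμ _ j)]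
      simp only [hpoint]
      rw [integral_const, probReal_univ, one_smul]
      rw [suffixValue_eq μ j, dif_pos hjn, suffixValue_eq μ (j+1),
        dif_neg (by omega : ¬ j + 1 < n)]
      apply integral_congr_ae
      filter_upwards [ae_Icc_of_supp (hμ ⟨j, hjn⟩)] with x hx
      rw [max_eq_left hx.1]
    · have hj1 : j + 1 < n := by omega
      have hθ : optThresholds μ ⟨j, hjn⟩ = suffixValue μ (j+1) := by
        simp only [optThresholds]
        rw [if_neg hl]
      rw [integral_prophetAux_step μ hμ _ hjn hl, ih (j+1) (by omega) hj1, hθ]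
      rw [← integral_ite_const (μ ⟨j, hjn⟩) (hμ _) _ (suffixValue μ (j+1))]
      rw [suffixValue_eq μ j, dif_pos hjn]
      apply integral_congr_ae
      apply Filter.Eventually.of_forall
      intro x
      dsimp only
      by_cases h : suffixValue μ (j+1) ≤ x
      · rw [if_pos h, max_eq_left h]
      · rw [if_neg h, max_eq_right (le_of_lt (lt_of_not_ge h))]

lemma integral_prophetAux_dom (D Dt : Fin n → Measure ℝ) [∀ i, IsProbabilityMeasure (D i)]
    [∀ i, IsProbabilityMeasure (Dt i)] (hD : ∀ i, SuppIn01 (D i)) (hDt : ∀ i, SuppIn01 (Dt i))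
    (hdom : StochDom D Dt) :
    ∀ j, j < n →
      suffixValue Dt j ≤ ∫ t, prophetAux (optThresholds Dt) t j ∂(Measure.pi D) := by
  suffices H : ∀ k j, n ≤ j + k → j < n →
      suffixValue Dt j ≤ ∫ t, prophetAux (optThresholds Dt) t j ∂(Measure.pi D) by
    intro j hj; exact H n j (by omega) hj
  intro k
  induction k with
  | zero => intro j hj hjn; omega
  | succ k ih =>
    intro j hj hjn
    by_cases hl : j = n - 1
    · have hpoint : ∀ (t : Fin n → ℝ) (x : ℝ),
          prophetAux (optThresholds Dt) (Function.update t ⟨j, hjn⟩ x) j = x := by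
        intro t x
        rw [prophetAux_eq, dif_pos hjn, if_pos hl, Function.update_self]
      rw [integral_update D ⟨j, hjn⟩ (integrable_prophetAux D hD _ j)]
      simp only [hpoint]
      rw [integral_const, probReal_univ, one_smul]
      rw [suffixValue_eq Dt j, dif_pos hjn, suffixValue_eq Dt (j+1),
        dif_neg (by omega : ¬ j + 1 < n)]
      have h1 : ∫ x, max x 0 ∂(Dt ⟨j, hjn⟩) ≤ ∫ x, max x 0 ∂(D ⟨j, hjn⟩) :=
        fosd_integral_max (hD _) (hDt _) (hdom _) le_rfl
      have h2 : ∫ x, max x 0 ∂(D ⟨j, hjn⟩) = ∫ x, x ∂(D ⟨j, hjn⟩) := by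
        apply integral_congr_ae
        filter_upwards [ae_Icc_of_supp (hD ⟨j, hjn⟩)] with x hx
        rw [max_eq_left hx.1]
      rw [← h2]
      exact h1
    · have hj1 : j + 1 < n := by omega
      set θj := optThresholds Dt ⟨j, hjn⟩ with hθdef
      have hθ : θj = suffixValue Dt (j+1) := by
        simp only [hθdef, optThresholds]
        rw [if_neg hl]
      have hθnn : 0 ≤ θj := by rw [hθ]; exact (suffixValue_bounds Dt hDt (j+1)).1
      rw [integral_prophetAux_step D hD _ hjn hl]
      have hIH : θj ≤ ∫ t, prophetAux (optThresholds Dt) t (j+1) ∂(Measure.pi D) := by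
        rw [hθ]; exact ih (j+1) (by omega) hj1
      have hstep1 : suffixValue Dt j ≤ ∫ x, max x θj ∂(D ⟨j, hjn⟩) := by
        rw [suffixValue_eq Dt j, dif_pos hjn, ← hθ]
        exact fosd_integral_max (hD _) (hDt _) (hdom _) hθnn
      have hstep2 : ∫ x, max x θj ∂(D ⟨j, hjn⟩)
          = (∫ x, (if θj ≤ x then x else 0) ∂(D ⟨j, hjn⟩))
            + (D ⟨j, hjn⟩ {x : ℝ | x < θj}).toReal * θj := by
        rw [← integral_ite_const (D ⟨j, hjn⟩) (hD _) θj θj]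
        apply integral_congr_ae
        apply Filter.Eventually.of_forall
        intro x
        dsimp only
        by_cases h : θj ≤ x
        · rw [if_pos h, max_eq_left h]
        · rw [if_neg h, max_eq_right (le_of_lt (lt_of_not_ge h))]
      refine le_trans hstep1 (le_trans (le_of_eq hstep2) ?_)
      have := mul_le_mul_of_nonneg_left hIH (ENNReal.toReal_nonneg
        (a := D ⟨j, hjn⟩ {x : ℝ | x < θj}))
      linarith

end Prophet

noncomputable def stopAux {n : ℕ} (θ t : Fin n → ℝ) : ℕ → ℕ
  | j =>
    if h : j < n then
      if j = n - 1 then j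
      else if θ ⟨j, h⟩ ≤ t ⟨j, h⟩ then j
      else stopAux θ t (j + 1)
    else 0
  termination_by j => n - j
  decreasing_by omega

section StopAux

variable {n : ℕ}

lemma stopAux_eq (θ t : Fin n → ℝ) (j : ℕ) :
    stopAux θ t j = if h : j < n then
      (if j = n - 1 then j
       else if θ ⟨j, h⟩ ≤ t ⟨j, h⟩ then j else stopAux θ t (j + 1))
    else 0 := by
  rw [stopAux]

lemma stopAux_lt (θ t : Fin n → ℝ) : ∀ j, j < n → stopAux θ t j < n ∧ j ≤ stopAux θ t j := by
  suffices H : ∀ k j, n ≤ j + k → j < n → stopAux θ t j < n ∧ j ≤ stopAux θ t j by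
    intro j hj; exact H n j (by omega) hj
  intro k
  induction k with
  | zero => intro j hj hjn; omega
  | succ k ih =>
    intro j hj hjn
    rw [stopAux_eq, dif_pos hjn]
    by_cases hl : j = n - 1
    · rw [if_pos hl]; omega
    · rw [if_neg hl]
      by_cases hc : θ ⟨j, hjn⟩ ≤ t ⟨j, hjn⟩
      · rw [if_pos hc]; omega
      · rw [if_neg hc]
        have := ih (j+1) (by omega) (by omega)
        omega

lemma prophetAux_stop (θ t : Fin n → ℝ) :
    ∀ j, j < n → ∀ i : Fin n, (i : ℕ) = stopAux θ t j → prophetAux θ t j = t i := by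
  suffices H : ∀ k j, n ≤ j + k → j < n →
      ∀ i : Fin n, (i : ℕ) = stopAux θ t j → prophetAux θ t j = t i by
    intro j hj; exact H n j (by omega) hj
  intro k
  induction k with
  | zero => intro j hj hjn; omega
  | succ k ih =>
    intro j hj hjn i hi
    rw [stopAux_eq, dif_pos hjn] at hi
    rw [prophetAux_eq, dif_pos hjn]
    by_cases hl : j = n - 1
    · rw [if_pos hl]
      rw [if_pos hl] at hi
      have : i = ⟨j, hjn⟩ := Fin.ext hi
      rw [this]
    · rw [if_neg hl]
      rw [if_neg hl] at hi
      by_cases hc : θ ⟨j, hjn⟩ ≤ t ⟨j, hjn⟩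
      · rw [if_pos hc]
        rw [if_pos hc] at hi
        have : i = ⟨j, hjn⟩ := Fin.ext hi
        rw [this]
      · rw [if_neg hc]
        rw [if_neg hc] at hi
        exact ih (j+1) (by omega) (by omega) i hi

lemma stopAux_congr (θ t t' : Fin n → ℝ) :
    ∀ j, j < n → (∀ i : Fin n, (i : ℕ) ≤ stopAux θ t j → t i = t' i) →
      stopAux θ t' j = stopAux θ t j := by
  suffices H : ∀ k j, n ≤ j + k → j < n →
      (∀ i : Fin n, (i : ℕ) ≤ stopAux θ t j → t i = t' i) →
      stopAux θ t' j = stopAux θ t j by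
    intro j hj; exact H n j (by omega) hj
  intro k
  induction k with
  | zero => intro j hj hjn; omega
  | succ k ih =>
    intro j hj hjn hag
    have hjle : j ≤ stopAux θ t j := (stopAux_lt θ t j hjn).2
    by_cases hl : j = n - 1
    · rw [stopAux_eq θ t' j, stopAux_eq θ t j, dif_pos hjn, dif_pos hjn, if_pos hl, if_pos hl]
    · have htj : t ⟨j, hjn⟩ = t' ⟨j, hjn⟩ := hag ⟨j, hjn⟩ (by simpa using hjle)
      by_cases hc : θ ⟨j, hjn⟩ ≤ t ⟨j, hjn⟩
      · have hstop : stopAux θ t j = j := by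
          rw [stopAux_eq, dif_pos hjn, if_neg hl, if_pos hc]
        rw [hstop]
        rw [stopAux_eq θ t' j, dif_pos hjn, if_neg hl, if_pos (htj ▸ hc)]
      · have hstop : stopAux θ t j = stopAux θ t (j+1) := by
          rw [stopAux_eq, dif_pos hjn, if_neg hl, if_neg hc]
        have hc' : ¬ θ ⟨j, hjn⟩ ≤ t' ⟨j, hjn⟩ := by rwa [← htj]
        rw [hstop]
        rw [stopAux_eq θ t' j, dif_pos hjn, if_neg hl, if_neg hc']
        exact ih (j+1) (by omega) (by omega) (by rw [← hstop]; exact hag)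

end StopAux

noncomputable def condIter {n : ℕ} (μ : Fin n → Measure ℝ) (g : (Fin n → ℝ) → ℝ) :
    ℕ → (Fin n → ℝ) → ℝ
  | j =>
    if h : j < n then
      fun t => ∫ x, condIter μ g (j + 1) (Function.update t ⟨j, h⟩ x) ∂(μ ⟨j, h⟩)
    else g
  termination_by j => n - j
  decreasing_by omega

section CondIter
open Function

variable {n : ℕ} (μ : Fin n → Measure ℝ) [∀ i, IsProbabilityMeasure (μ i)]
  {g : (Fin n → ℝ) → ℝ}

lemma condIter_eq (g : (Fin n → ℝ) → ℝ) (j : ℕ) :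
    condIter μ g j = if h : j < n then
      (fun t => ∫ x, condIter μ g (j + 1) (Function.update t ⟨j, h⟩ x) ∂(μ ⟨j, h⟩))
    else g := by
  rw [condIter]

lemma condIter_measurable (hg : Measurable g) : ∀ j, Measurable (condIter μ g j) := by
  suffices H : ∀ k j, n ≤ j + k → Measurable (condIter μ g j) by
    intro j; exact H n j (by omega)
  intro k
  induction k with
  | zero =>
    intro j hj
    rw [condIter_eq, dif_neg (by omega : ¬ j < n)]
    exact hg
  | succ k ih =>
    intro j hj
    by_cases h : j < n
    · rw [condIter_eq, dif_pos h]
      have hF : StronglyMeasurable (fun p : (Fin n → ℝ) × ℝ =>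
          condIter μ g (j+1) (Function.update p.1 ⟨j, h⟩ p.2)) :=
        ((ih (j+1) (by omega)).stronglyMeasurable).comp_measurable (measurable_updateFun ⟨j, h⟩)
      exact hF.integral_prod_right'.measurable
    · rw [condIter_eq, dif_neg h]; exact hg

lemma condIter_integrable (hg : Measurable g) (hgi : Integrable g (Measure.pi μ)) :
    ∀ j, Integrable (condIter μ g j) (Measure.pi μ)
      ∧ ∫ t, condIter μ g j t ∂(Measure.pi μ) = ∫ t, g t ∂(Measure.pi μ) := by
  suffices H : ∀ k j, n ≤ j + k → Integrable (condIter μ g j) (Measure.pi μ)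
      ∧ ∫ t, condIter μ g j t ∂(Measure.pi μ) = ∫ t, g t ∂(Measure.pi μ) by
    intro j; exact H n j (by omega)
  intro k
  induction k with
  | zero =>
    intro j hj
    rw [condIter_eq, dif_neg (by omega : ¬ j < n)]
    exact ⟨hgi, rfl⟩
  | succ k ih =>
    intro j hj
    by_cases h : j < n
    · obtain ⟨hF, hFeq⟩ := ih (j+1) (by omega)
      have hH : Integrable (fun p : (Fin n → ℝ) × ℝ =>
          condIter μ g (j+1) (Function.update p.1 ⟨j, h⟩ p.2))
          ((Measure.pi μ).prod (μ ⟨j, h⟩)) := integrable_comp_update μ ⟨j, h⟩ hF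
      constructor
      · rw [condIter_eq, dif_pos h]
        exact hH.integral_prod_left
      · rw [condIter_eq, dif_pos h]
        rw [← integral_update μ ⟨j, h⟩ hF]
        exact hFeq
    · rw [condIter_eq, dif_neg h]; exact ⟨hgi, rfl⟩

/-- Key a.e. bound: the backward conditional values of any nonanticipating stopping rule
are dominated by the dynamic programming values. -/
lemma condIter_ae_le (hμ : ∀ i, SuppIn01 (μ i)) {τ : (Fin n → ℝ) → Fin n}
    (hτ : Nonanticipating τ) (hg : Measurable g) (hgi : Integrable g (Measure.pi μ))
    (hfg : (fun t => t (τ t)) =ᵐ[Measure.pi μ] g) :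
    ∀ j, ∀ᵐ t ∂(Measure.pi μ),
      condIter μ g j t ≤ if (τ t : ℕ) < j then t (τ t) else suffixValue μ j := by
  suffices H : ∀ k j, n ≤ j + k → ∀ᵐ t ∂(Measure.pi μ),
      condIter μ g j t ≤ if (τ t : ℕ) < j then t (τ t) else suffixValue μ j by
    intro j
    by_cases hj : j ≤ n
    · exact H n j (by omega)
    · exact H (j) j (by omega)
  intro k
  induction k with
  | zero =>
    intro j hj
    filter_upwards [hfg] with t ht
    rw [condIter_eq, dif_neg (by omega : ¬ j < n), if_pos (lt_of_lt_of_le (τ t).isLt (by omega))]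
    exact le_of_eq ht.symm
  | succ k ih =>
    intro j hj
    by_cases h : j < n
    · set j' : Fin n := ⟨j, h⟩ with hj'
      have MP : MeasurePreserving (fun p : (Fin n → ℝ) × ℝ => Function.update p.1 j' p.2)
          ((Measure.pi μ).prod (μ j')) (Measure.pi μ) :=
        ⟨measurable_updateFun j', map_update μ j'⟩
      have IH := ih (j+1) (by omega)
      have hprod := MP.quasiMeasurePreserving.ae IH
      have hsec := Measure.ae_ae_of_ae_prod hprod
      obtain ⟨hF, -⟩ := condIter_integrable μ hg hgi (j+1)
      have hH : Integrable (fun p : (Fin n → ℝ) × ℝ =>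
          condIter μ g (j+1) (Function.update p.1 j' p.2))
          ((Measure.pi μ).prod (μ j')) := integrable_comp_update μ j' hF
      have hsecint := hH.prod_right_ae
      filter_upwards [hsec, hsecint] with t hPt hIt
      rw [condIter_eq, dif_pos h]
      by_cases hc : (τ t : ℕ) < j
      · rw [if_pos (by omega : (τ t : ℕ) < j)]
        have hτne : τ t ≠ j' := by
          intro hcontr
          rw [hcontr] at hc
          simp [hj'] at hc
        have hbound : ∀ᵐ x ∂(μ j'),
            condIter μ g (j+1) (Function.update t j' x) ≤ t (τ t) := by
          filter_upwards [hPt] with x hPx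
          have hτu : τ (Function.update t j' x) = τ t := by
            apply hτ t
            intro i hi
            have : i ≠ j' := by
              intro hcontr
              rw [hcontr] at hi
              have : (j' : ℕ) ≤ (τ t : ℕ) := hi
              simp [hj'] at this
              omega
            rw [Function.update_of_ne this]
          rw [if_pos (by rw [hτu]; omega : (τ (Function.update t j' x) : ℕ) < j + 1)] at hPx
          rw [hτu, Function.update_of_ne hτne] at hPx
          exact hPx
        calc ∫ x, condIter μ g (j+1) (Function.update t j' x) ∂(μ j')
            ≤ ∫ _, t (τ t) ∂(μ j') := integral_mono_ae hIt (integrable_const _) hbound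
          _ = t (τ t) := by rw [integral_const, probReal_univ, one_smul]
      · rw [if_neg (by omega : ¬ (τ t : ℕ) < j)]
        have hbound : ∀ᵐ x ∂(μ j'),
            condIter μ g (j+1) (Function.update t j' x) ≤ max x (suffixValue μ (j+1)) := by
          filter_upwards [hPt] with x hPx
          set u := Function.update t j' x with hu
          by_cases hcu : (τ u : ℕ) < j + 1
          · have hcu2 : ¬ (τ u : ℕ) < j := by
              intro hlt
              have hτt : τ t = τ u := by
                apply hτ u
                intro i hi
                have : i ≠ j' := by
                  intro hcontr
                  rw [hcontr] at hi
                  have : (j' : ℕ) ≤ (τ u : ℕ) := hi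
                  simp [hj'] at this
                  omega
                rw [hu, Function.update_of_ne this]
              rw [hτt] at hc
              exact hc hlt
            have hvn : (τ u : ℕ) = j := by omega
            have hval : τ u = j' := Fin.ext (by simp [hj', hvn])
            rw [if_pos hcu, hval, hu, Function.update_self] at hPx
            exact le_trans hPx (le_max_left _ _)
          · rw [if_neg hcu] at hPx
            exact le_trans hPx (le_max_right _ _)
        calc ∫ x, condIter μ g (j+1) (Function.update t j' x) ∂(μ j')
            ≤ ∫ x, max x (suffixValue μ (j+1)) ∂(μ j') :=
              integral_mono_ae hIt (integrable_max (hμ j') _) hbound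
          _ = suffixValue μ j := by rw [suffixValue_eq μ j, dif_pos h]
    · -- j ≥ n : same as base case
      filter_upwards [hfg] with t ht
      rw [condIter_eq, dif_neg h, if_pos (lt_of_lt_of_le (τ t).isLt (by omega))]
      exact le_of_eq ht.symm

end CondIter


/-!
STATEMENT 10: prophet inequality is strongly monotone: for `D ⪰ D̃`, the
backward-induction optimal thresholds `θ̃` for `D̃` satisfy
`E_{t∼D}[h_{θ̃}(t)] ≥ E_{t∼D̃}[h_{θ̃}(t)]`, and the latter is the optimal expected
reward over all stopping strategies on `D̃`. -/
theorem stmt10 (n : ℕ) (hn : 1 ≤ n) (D Dt : Fin n → Measure ℝ)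
    [∀ i, IsProbabilityMeasure (D i)] [∀ i, IsProbabilityMeasure (Dt i)]
    (hD : ∀ i, SuppIn01 (D i)) (hDt : ∀ i, SuppIn01 (Dt i))
    (hdom : StochDom D Dt) :
    expVal (prophetReward (optThresholds Dt)) Dt
        ≤ expVal (prophetReward (optThresholds Dt)) D
      ∧ expVal (prophetReward (optThresholds Dt)) Dt = optStopValue Dt := by
  classical
  have h0 : 0 < n := hn
  set θ := optThresholds Dt with hθdef
  have hA : expVal (prophetReward θ) Dt = suffixValue Dt 0 := by
    unfold expVal prophetReward
    exact integral_prophetAux_optimal Dt hDt 0 h0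
  have hM : suffixValue Dt 0 ≤ expVal (prophetReward θ) D := by
    unfold expVal prophetReward
    exact integral_prophetAux_dom D Dt hD hDt hdom 0 h0
  refine ⟨by rw [hA]; exact hM, ?_⟩
  rw [hA]
  unfold optStopValue
  haveI hne : Nonempty {τ : (Fin n → ℝ) → Fin n // Nonanticipating τ} :=
    ⟨⟨fun _ => ⟨0, h0⟩, fun t t' _ => rfl⟩⟩
  have hbound : ∀ τ : {τ : (Fin n → ℝ) → Fin n // Nonanticipating τ},
      ∫ t, t ((τ : (Fin n → ℝ) → Fin n) t) ∂(Measure.pi Dt) ≤ suffixValue Dt 0 := by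
    rintro ⟨τ, hτ⟩
    by_cases hint : Integrable (fun t => t (τ t)) (Measure.pi Dt)
    · set g := hint.1.mk (fun t : Fin n → ℝ => t (τ t)) with hgdef
      have hgm : StronglyMeasurable g := hint.1.stronglyMeasurable_mk
      have hfg : (fun t => t (τ t)) =ᵐ[Measure.pi Dt] g := hint.1.ae_eq_mk
      have hgi : Integrable g (Measure.pi Dt) := hint.congr hfg
      obtain ⟨hci, hceq⟩ := condIter_integrable Dt hgm.measurable hgi 0
      have hae := condIter_ae_le Dt hDt hτ hgm.measurable hgi hfg 0
      have hle : ∫ t, condIter Dt g 0 t ∂(Measure.pi Dt) ≤ suffixValue Dt 0 := by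
        have h2 : ∫ t, condIter Dt g 0 t ∂(Measure.pi Dt)
            ≤ ∫ _, suffixValue Dt 0 ∂(Measure.pi Dt) := by
          apply integral_mono_ae hci (integrable_const _)
          filter_upwards [hae] with t ht
          rwa [if_neg (Nat.not_lt_zero _)] at ht
        simpa using h2
      calc ∫ t, t (τ t) ∂(Measure.pi Dt) = ∫ t, g t ∂(Measure.pi Dt) := integral_congr_ae hfg
        _ = ∫ t, condIter Dt g 0 t ∂(Measure.pi Dt) := hceq.symm
        _ ≤ suffixValue Dt 0 := hle
    · rw [integral_undef hint]
      exact (suffixValue_bounds Dt hDt 0).1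
  have hup : (⨆ τ : {τ : (Fin n → ℝ) → Fin n // Nonanticipating τ},
      ∫ t, t ((τ : (Fin n → ℝ) → Fin n) t) ∂(Measure.pi Dt)) ≤ suffixValue Dt 0 :=
    ciSup_le hbound
  set τθ : (Fin n → ℝ) → Fin n := fun t => ⟨stopAux θ t 0, (stopAux_lt θ t 0 h0).1⟩ with hτθ
  have hNA : Nonanticipating τθ := by
    intro t t' hag
    have hs : stopAux θ t' 0 = stopAux θ t 0 := by
      apply stopAux_congr θ t t' 0 h0
      intro i hi
      exact hag i hi
    simp only [hτθ]
    exact Fin.ext hs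
  have hτval : ∫ t, t (τθ t) ∂(Measure.pi Dt) = suffixValue Dt 0 := by
    rw [← integral_prophetAux_optimal Dt hDt 0 h0]
    apply integral_congr_ae
    apply Filter.Eventually.of_forall
    intro t
    exact (prophetAux_stop θ t 0 h0 (τθ t) rfl).symm
  have hlo : suffixValue Dt 0 ≤ ⨆ τ : {τ : (Fin n → ℝ) → Fin n // Nonanticipating τ},
      ∫ t, t ((τ : (Fin n → ℝ) → Fin n) t) ∂(Measure.pi Dt) := by
    rw [← hτval]
    have hbdd : BddAbove (Set.range fun τ : {τ : (Fin n → ℝ) → Fin n // Nonanticipating τ} =>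
        ∫ t, t ((τ : (Fin n → ℝ) → Fin n) t) ∂(Measure.pi Dt)) :=
      ⟨suffixValue Dt 0, fun y hy => by obtain ⟨τ, rfl⟩ := hy; exact hbound τ⟩
    exact le_ciSup hbdd ⟨τθ, hNA⟩
  exact le_antisymm hlo hup
end
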